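/- arXiv:2006.10545 — 5 statements merged into one kernel-verified Lean document; each statement's English description precedes it below -/
import Mathlib

section
/- For every integer m ≥ 1, the following identity holds: the sum over all ordered triples (m1, m2, m3) of non-negative integers with m1 + m2 + m3 = m − 1 of (m! / (m1! · m2! · m3!)) · c(m1+2) · c(m2+2) · c(m3+2) equals m · c(m+2). -/
open Finset

/-- `c j = (2j-5)‼`, the number of leaf-labeled binary trees on `j` leaves
(note `c 2 = 0‼ = 1` by truncated subtraction, as required). -/
def treeCount (j : ℕ) : ℕ := Nat.doubleFactorial (2 * j - 5)

namespace SplitAux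

/-- `g a = (2a-1)‼` (with `g 0 = 1` by truncated subtraction). -/
def g (a : ℕ) : ℕ := Nat.doubleFactorial (2 * a - 1)

lemma g_zero : g 0 = 1 := rfl

lemma g_succ (a : ℕ) : g (a + 1) = (2 * a + 1) * g a := by
  cases a with
  | zero => rfl
  | succ b =>
    show Nat.doubleFactorial (2 * (b + 2) - 1) = _
    have h1 : 2 * (b + 2) - 1 = (2 * b + 1) + 2 := by omega
    have h2 : 2 * (b + 1) - 1 = 2 * b + 1 := by omega
    rw [h1, Nat.doubleFactorial_add_two]
    unfold g
    rw [h2]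
    ring

lemma treeCount_eq (x : ℕ) : treeCount (x + 2) = g x := by
  unfold treeCount g
  have : 2 * (x + 2) - 5 = 2 * x - 1 := by omega
  rw [this]

/-- key sum manipulation: Pascal's rule on binomial-weighted antidiagonal sums. -/
lemma key (h : ℕ → ℕ) (n : ℕ) :
    ∑ p ∈ Finset.HasAntidiagonal.antidiagonal (n + 1), (n + 1).choose p.1 * (g p.1 * h p.2)
    = ∑ p ∈ Finset.HasAntidiagonal.antidiagonal n, n.choose p.1 * (g (p.1 + 1) * h p.2)
      + ∑ p ∈ Finset.HasAntidiagonal.antidiagonal n, n.choose p.1 * (g p.1 * h (p.2 + 1)) := by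
  rw [Finset.Nat.sum_antidiagonal_succ
    (f := fun p => (n + 1).choose p.1 * (g p.1 * h p.2))]
  have pascal : ∀ p ∈ Finset.HasAntidiagonal.antidiagonal n,
      (n + 1).choose (p.1 + 1) * (g (p.1 + 1) * h p.2)
      = n.choose p.1 * (g (p.1 + 1) * h p.2)
        + n.choose (p.1 + 1) * (g (p.1 + 1) * h p.2) := by
    intro p _
    rw [Nat.choose_succ_succ, add_mul]
  rw [Finset.sum_congr rfl pascal, Finset.sum_add_distrib]
  simp only [Nat.choose_zero_right, g_zero, one_mul]
  have h2 : h (n + 1)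
      + ∑ p ∈ Finset.HasAntidiagonal.antidiagonal n, n.choose (p.1 + 1) * (g (p.1 + 1) * h p.2)
      = ∑ p ∈ Finset.HasAntidiagonal.antidiagonal (n + 1), n.choose p.1 * (g p.1 * h p.2) := by
    rw [Finset.Nat.sum_antidiagonal_succ (f := fun p => n.choose p.1 * (g p.1 * h p.2))]
    simp [g_zero]
  have h3 : ∑ p ∈ Finset.HasAntidiagonal.antidiagonal (n + 1), n.choose p.1 * (g p.1 * h p.2)
      = ∑ p ∈ Finset.HasAntidiagonal.antidiagonal n, n.choose p.1 * (g p.1 * h (p.2 + 1)) := by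
    rw [Finset.Nat.sum_antidiagonal_succ' (f := fun p => n.choose p.1 * (g p.1 * h p.2))]
    simp [Nat.choose_succ_self]
  omega

/-- the inner double sum: `T n = ∑_{a+b=n} C(n,a) (2a-1)‼ (2b-1)‼`. -/
def T (n : ℕ) : ℕ := ∑ p ∈ Finset.HasAntidiagonal.antidiagonal n, n.choose p.1 * (g p.1 * g p.2)

lemma T_zero : T 0 = 1 := rfl

lemma T_succ (n : ℕ) : T (n + 1) = (2 * n + 2) * T n := by
  unfold T
  rw [key g n, ← Finset.sum_add_distrib, Finset.mul_sum]
  apply Finset.sum_congr rfl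
  intro p hp
  have hpn : p.1 + p.2 = n := Finset.HasAntidiagonal.mem_antidiagonal.mp hp
  rw [g_succ, g_succ]
  have : 2 * n + 2 = (2 * p.1 + 1) + (2 * p.2 + 1) := by omega
  rw [this]
  ring

/-- the triple sum, nested form. -/
def S (n : ℕ) : ℕ := ∑ p ∈ Finset.HasAntidiagonal.antidiagonal n, n.choose p.1 * (g p.1 * T p.2)

lemma S_succ (n : ℕ) : S (n + 1) = (2 * n + 3) * S n := by
  unfold S
  rw [key T n, ← Finset.sum_add_distrib, Finset.mul_sum]
  apply Finset.sum_congr rfl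
  intro p hp
  have hpn : p.1 + p.2 = n := Finset.HasAntidiagonal.mem_antidiagonal.mp hp
  rw [g_succ, T_succ]
  have : 2 * n + 3 = (2 * p.1 + 1) + (2 * p.2 + 2) := by omega
  rw [this]
  ring

lemma S_eq (n : ℕ) : S n = g (n + 1) := by
  induction n with
  | zero => rfl
  | succ n ih =>
    rw [S_succ, ih, show g (n + 1 + 1) = (2 * (n + 1) + 1) * g (n + 1) from g_succ (n + 1)]
    ring

/-- splitting a sum over `antidiagonalTuple (k+1) n`. -/
lemma tuple_split (k n : ℕ) (F : (Fin (k + 1) → ℕ) → ℕ) :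
    ∑ x ∈ Finset.Nat.antidiagonalTuple (k + 1) n, F x
    = ∑ p ∈ Finset.HasAntidiagonal.antidiagonal n, ∑ y ∈ Finset.Nat.antidiagonalTuple k p.2,
        F (Fin.cons p.1 y : Fin (k + 1) → ℕ) := by
  rw [Finset.sum_sigma']
  symm
  apply Finset.sum_nbij'
    (i := fun (q : Σ _ : ℕ × ℕ, Fin k → ℕ) => (Fin.cons q.1.1 q.2 : Fin (k + 1) → ℕ))
    (j := fun x => ⟨(x 0, ∑ i : Fin k, x i.succ), Fin.tail x⟩)
  · rintro ⟨⟨a, b⟩, y⟩ h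
    simp only [Finset.mem_sigma, Finset.HasAntidiagonal.mem_antidiagonal,
      Finset.Nat.mem_antidiagonalTuple] at h
    rw [Finset.Nat.mem_antidiagonalTuple, Fin.sum_cons, h.2, h.1]
  · intro x hx
    rw [Finset.Nat.mem_antidiagonalTuple, Fin.sum_univ_succ] at hx
    simp only [Finset.mem_sigma, Finset.HasAntidiagonal.mem_antidiagonal, Finset.Nat.mem_antidiagonalTuple]
    exact ⟨hx, rfl⟩
  · rintro ⟨⟨a, b⟩, y⟩ h
    simp only [Finset.mem_sigma, Finset.HasAntidiagonal.mem_antidiagonal,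
      Finset.Nat.mem_antidiagonalTuple] at h
    simp [Fin.tail_cons, h.2]
  · intro x hx
    simp [Fin.cons_self_tail]
  · intros; rfl

lemma div_eq (n a b c : ℕ) (habc : a + b + c = n) :
    (n + 1).factorial / (a.factorial * b.factorial * c.factorial)
    = (n + 1) * (n.choose a * (b + c).choose b) := by
  have h1 : (b + c).choose b * c.factorial * b.factorial = (b + c).factorial := by
    have := Nat.add_choose_mul_factorial_mul_factorial c b
    rwa [add_comm c b] at this
  have h2 := Nat.add_choose_mul_factorial_mul_factorial (b + c) a
  rw [show b + c + a = n by omega] at h2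
  apply Nat.div_eq_of_eq_mul_left
  · positivity
  · rw [Nat.factorial_succ, ← h2, ← h1]
    ring

lemma cons3_zero (a : ℕ) (y : Fin 2 → ℕ) : (Fin.cons a y : Fin 3 → ℕ) 0 = a := rfl
lemma cons3_one (a : ℕ) (y : Fin 2 → ℕ) : (Fin.cons a y : Fin 3 → ℕ) 1 = y 0 := rfl
lemma cons2_one (a : ℕ) (y : Fin 1 → ℕ) : (Fin.cons a y : Fin 2 → ℕ) 1 = y 0 := rfl
lemma cons3_two (a : ℕ) (y : Fin 2 → ℕ) : (Fin.cons a y : Fin 3 → ℕ) 2 = y 1 := rfl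

end SplitAux

theorem split_count_identity (m : ℕ) (hm : 1 ≤ m) :
    ∑ x ∈ Finset.Nat.antidiagonalTuple 3 (m - 1),
      (m.factorial / ((x 0).factorial * (x 1).factorial * (x 2).factorial)) *
        (treeCount (x 0 + 2) * treeCount (x 1 + 2) * treeCount (x 2 + 2))
      = m * treeCount (m + 2) := by
  open SplitAux in
  obtain ⟨n, rfl⟩ : ∃ n, m = n + 1 := ⟨m - 1, by omega⟩
  simp only [Nat.add_sub_cancel]
  have step1 : ∀ x ∈ Finset.Nat.antidiagonalTuple 3 n,
      ((n + 1).factorial / ((x 0).factorial * (x 1).factorial * (x 2).factorial)) *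
        (treeCount (x 0 + 2) * treeCount (x 1 + 2) * treeCount (x 2 + 2))
      = (n + 1) * ((n.choose (x 0) * ((x 1 + x 2).choose (x 1))) *
          (g (x 0) * (g (x 1) * g (x 2)))) := by
    intro x hx
    rw [Finset.Nat.mem_antidiagonalTuple, Fin.sum_univ_three] at hx
    rw [div_eq n (x 0) (x 1) (x 2) hx, treeCount_eq, treeCount_eq, treeCount_eq]
    ring
  rw [Finset.sum_congr rfl step1, tuple_split 2 n]
  have inner : ∀ p ∈ Finset.HasAntidiagonal.antidiagonal n,
      (∑ y ∈ Finset.Nat.antidiagonalTuple 2 p.2,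
        (n + 1) * ((n.choose ((Fin.cons p.1 y : Fin 3 → ℕ) 0) *
            (((Fin.cons p.1 y : Fin 3 → ℕ) 1 + (Fin.cons p.1 y : Fin 3 → ℕ) 2).choose
              ((Fin.cons p.1 y : Fin 3 → ℕ) 1))) *
          (g ((Fin.cons p.1 y : Fin 3 → ℕ) 0) * (g ((Fin.cons p.1 y : Fin 3 → ℕ) 1) *
            g ((Fin.cons p.1 y : Fin 3 → ℕ) 2)))))
      = (n + 1) * (n.choose p.1 * (g p.1 * T p.2)) := by
    intro p hp
    simp only [cons3_zero, cons3_one, cons3_two]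
    unfold T
    rw [Finset.mul_sum, Finset.mul_sum, Finset.mul_sum,
      Finset.Nat.antidiagonalTuple_two, Finset.sum_map]
    apply Finset.sum_congr rfl
    intro q hq
    have hq2 : q.1 + q.2 = p.2 := Finset.HasAntidiagonal.mem_antidiagonal.mp hq
    simp only [Equiv.coe_toEmbedding, piFinTwoEquiv_symm_apply, Matrix.cons_val_zero,
      Matrix.cons_val_one, Matrix.head_cons, Fin.cons_zero, cons2_one, hq2]
    ring
  rw [Finset.sum_congr rfl inner, ← Finset.mul_sum]
  have : ∑ p ∈ Finset.HasAntidiagonal.antidiagonal n, n.choose p.1 * (g p.1 * T p.2) = S n := rfl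
  rw [this, S_eq, show n + 1 + 2 = (n + 1) + 2 from rfl, treeCount_eq]
end

section
/- For every ε ∈ (0, 1/3), the split-size probabilities converge to the Dirichlet(1/2,1/2,1/2) density uniformly in the bulk: as m → ∞, the supremum over all ordered triples (m1, m2, m3) of positive integers with m1 + m2 + m3 = m − 1 and min(m1, m2, m3) ≥ εm of | p_m(m1, m2, m3) · 2π · m² · (m1 m2 m3 / m³)^{1/2} − 1 | tends to 0. -/
open Filter Real Nat

lemma tree_nat (n : ℕ) (hn : 0 < n) : treeCount (n+2) * (2^n * n !) = (2*n)! := by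
  obtain ⟨j, rfl⟩ := Nat.exists_eq_succ_of_ne_zero hn.ne'
  simp only [treeCount]
  have h1 : 2 * (j + 1 + 2) - 5 = 2*j+1 := by omega
  have key : (2*(j+1))! = 2^(j+1) * (j+1)! * (2*j+1)‼ := by
    rw [show 2*(j+1) = (2*j+1)+1 from by omega, Nat.factorial_eq_mul_doubleFactorial,
      show 2*j+1+1 = 2*(j+1) from by omega, Nat.doubleFactorial_two_mul]
  rw [h1, key]; simp only [Nat.succ_eq_add_one]; ring

noncomputable def s (n : ℕ) : ℝ := Stirling.stirlingSeq n

lemma s_pos {n : ℕ} (hn : 0 < n) : 0 < s n := by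
  obtain ⟨j, rfl⟩ := Nat.exists_eq_succ_of_ne_zero hn.ne'
  exact Stirling.stirlingSeq'_pos j

lemma fact_s {n : ℕ} (hn : 0 < n) :
    (n ! : ℝ) = s n * (Real.sqrt (2*n) * ((n:ℝ)/Real.exp 1)^n) := by
  have h1 : (0:ℝ) < Real.sqrt (2*n) := Real.sqrt_pos.2 (by positivity)
  have h2 : (0:ℝ) < ((n:ℝ)/Real.exp 1)^n := by positivity
  rw [s, Stirling.stirlingSeq]
  field_simp

lemma factSq {n : ℕ} (hn : 0 < n) :
    ((n ! : ℝ))^2 = (s n)^2 * (2 * Real.sqrt n ^ 2) * (((n:ℝ)/Real.exp 1)^n)^2 := by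
  rw [fact_s hn, mul_pow, mul_pow, Real.sq_sqrt (by positivity),
    Real.sq_sqrt (by positivity : (0:ℝ) ≤ (n:ℝ))]
  ring

lemma fact2 {n : ℕ} (hn : 0 < n) :
    (((2*n)! : ℝ)) = s (2*n) * (2 * Real.sqrt n) * ((2:ℝ)^(2*n) * (((n:ℝ)/Real.exp 1)^n)^2) := by
  have := fact_s (n := 2*n) (by omega)
  rw [this]
  have h4 : Real.sqrt (2*(2*n:ℕ)) = 2 * Real.sqrt n := by
    push_cast
    rw [show (2:ℝ)*(2*(n:ℝ)) = 4 * n by ring, Real.sqrt_mul (by norm_num),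
      show Real.sqrt 4 = 2 by rw [show (4:ℝ)=2^2 by norm_num, Real.sqrt_sq (by norm_num)]]
  have h5 : (((2*n:ℕ):ℝ)/Real.exp 1)^(2*n) = (2:ℝ)^(2*n) * (((n:ℝ)/Real.exp 1)^n)^2 := by
    push_cast
    rw [show (2*(n:ℝ))/Real.exp 1 = 2 * ((n:ℝ)/Real.exp 1) by ring, mul_pow, ← pow_mul,
      Nat.mul_comm n 2]
  rw [h4, h5]; ring

/-- The split-size probability
`p_m(m₁,m₂,m₃) = (m!/(m₁! m₂! m₃!)) c(m₁+2) c(m₂+2) c(m₃+2) / (m c(m+2))`. -/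
noncomputable def splitProb (m m1 m2 m3 : ℕ) : ℝ :=
  (m.factorial : ℝ) / ((m1.factorial : ℝ) * (m2.factorial : ℝ) * (m3.factorial : ℝ)) *
      ((treeCount (m1 + 2) : ℝ) * (treeCount (m2 + 2) : ℝ) * (treeCount (m3 + 2) : ℝ)) /
    ((m : ℝ) * (treeCount (m + 2) : ℝ))

lemma tree_r {n : ℕ} (hn : 0 < n) :
    (treeCount (n+2) : ℝ) = ((2*n)! : ℝ) / ((2:ℝ)^n * (n ! : ℝ)) := by
  rw [eq_div_iff (by positivity)]
  exact_mod_cast congrArg (Nat.cast : ℕ → ℝ) (tree_nat n hn)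

lemma splitProb_factorial (m1 m2 m3 : ℕ) (h1 : 0 < m1) (h2 : 0 < m2) (h3 : 0 < m3) :
    splitProb (m1+m2+m3+1) m1 m2 m3 =
      2 * (((m1+m2+m3+1)! : ℝ))^2 * (((2*m1)! : ℝ) * ((2*m2)! : ℝ) * ((2*m3)! : ℝ)) /
        (((m1+m2+m3+1 : ℕ) : ℝ) * (((2*(m1+m2+m3+1))! : ℝ)) *
          ((m1 ! : ℝ)^2 * (m2 ! : ℝ)^2 * (m3 ! : ℝ)^2)) := by
  have hM : 0 < m1+m2+m3+1 := by omega
  rw [splitProb, tree_r h1, tree_r h2, tree_r h3, tree_r hM]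
  have f1 : (0:ℝ) < (m1 ! : ℝ) := by exact_mod_cast Nat.factorial_pos m1
  have f2 : (0:ℝ) < (m2 ! : ℝ) := by exact_mod_cast Nat.factorial_pos m2
  have f3 : (0:ℝ) < (m3 ! : ℝ) := by exact_mod_cast Nat.factorial_pos m3
  have f4 : (0:ℝ) < ((2*(m1+m2+m3+1))! : ℝ) := by exact_mod_cast Nat.factorial_pos _
  have f5 : (0:ℝ) < ((m1+m2+m3+1:ℕ) : ℝ) := by exact_mod_cast hM
  field_simp
  ring

set_option maxHeartbeats 2000000 in
lemma key (m1 m2 m3 : ℕ) (h1 : 0 < m1) (h2 : 0 < m2) (h3 : 0 < m3) :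
    splitProb (m1+m2+m3+1) m1 m2 m3 * (2 * Real.pi) * ((m1+m2+m3+1 : ℕ) : ℝ)^2 *
      Real.sqrt ((m1:ℝ) * (m2:ℝ) * (m3:ℝ) / ((m1+m2+m3+1 : ℕ) : ℝ)^3) =
    Real.pi * (s (m1+m2+m3+1))^2 * (s (2*m1) * s (2*m2) * s (2*m3)) /
      (s (2*(m1+m2+m3+1)) * ((s m1)^2 * (s m2)^2 * (s m3)^2)) := by
  have hM : 0 < m1+m2+m3+1 := by omega
  have c1 : (0:ℝ) < (m1:ℝ) := by exact_mod_cast h1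
  have c2 : (0:ℝ) < (m2:ℝ) := by exact_mod_cast h2
  have c3 : (0:ℝ) < (m3:ℝ) := by exact_mod_cast h3
  have cM : (0:ℝ) < ((m1+m2+m3+1:ℕ):ℝ) := by exact_mod_cast hM
  have e1 : Real.sqrt ((m1:ℝ))^2 = (m1:ℝ) := Real.sq_sqrt c1.le
  have e2 : Real.sqrt ((m2:ℝ))^2 = (m2:ℝ) := Real.sq_sqrt c2.le
  have e3 : Real.sqrt ((m3:ℝ))^2 = (m3:ℝ) := Real.sq_sqrt c3.le
  have eM : Real.sqrt (((m1+m2+m3+1:ℕ):ℝ))^2 = ((m1+m2+m3+1:ℕ):ℝ) := Real.sq_sqrt cM.le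
  have hsqrt : Real.sqrt ((m1:ℝ) * (m2:ℝ) * (m3:ℝ) / ((m1+m2+m3+1 : ℕ) : ℝ)^3) =
      Real.sqrt (m1:ℝ) * Real.sqrt (m2:ℝ) * Real.sqrt (m3:ℝ) /
        Real.sqrt ((m1+m2+m3+1:ℕ):ℝ)^3 := by
    rw [show (m1:ℝ) * (m2:ℝ) * (m3:ℝ) / ((m1+m2+m3+1 : ℕ) : ℝ)^3 =
        (Real.sqrt (m1:ℝ) * Real.sqrt (m2:ℝ) * Real.sqrt (m3:ℝ) /
          Real.sqrt ((m1+m2+m3+1:ℕ):ℝ)^3)^2 from ?_]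
    · exact Real.sqrt_sq (by positivity)
    · rw [div_pow, show (Real.sqrt (((m1+m2+m3+1:ℕ):ℝ))^3)^2 =
          (Real.sqrt (((m1+m2+m3+1:ℕ):ℝ))^2)^3 from by ring, eM]
      rw [mul_pow, mul_pow, e1, e2, e3]
  rw [splitProb_factorial m1 m2 m3 h1 h2 h3, hsqrt, factSq hM, factSq h1, factSq h2, factSq h3,
    fact2 hM, fact2 h1, fact2 h2, fact2 h3]
  have s1 : s m1 ≠ 0 := (s_pos h1).ne'
  have s2 : s m2 ≠ 0 := (s_pos h2).ne'
  have s3 : s m3 ≠ 0 := (s_pos h3).ne'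
  have sM : s (m1+m2+m3+1) ≠ 0 := (s_pos hM).ne'
  have t1 : s (2*m1) ≠ 0 := (s_pos (by omega)).ne'
  have t2 : s (2*m2) ≠ 0 := (s_pos (by omega)).ne'
  have t3 : s (2*m3) ≠ 0 := (s_pos (by omega)).ne'
  have tM : s (2*(m1+m2+m3+1)) ≠ 0 := (s_pos (by omega)).ne'
  have r1 : (0:ℝ) < Real.sqrt (m1:ℝ) := Real.sqrt_pos.2 c1
  have r2 : (0:ℝ) < Real.sqrt (m2:ℝ) := Real.sqrt_pos.2 c2
  have r3 : (0:ℝ) < Real.sqrt (m3:ℝ) := Real.sqrt_pos.2 c3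
  have rM : (0:ℝ) < Real.sqrt ((m1+m2+m3+1:ℕ):ℝ) := Real.sqrt_pos.2 cM
  have x1 : ((m1:ℝ)/Real.exp 1)^m1 ≠ 0 := by positivity
  have x2 : ((m2:ℝ)/Real.exp 1)^m2 ≠ 0 := by positivity
  have x3 : ((m3:ℝ)/Real.exp 1)^m3 ≠ 0 := by positivity
  have xM : (((m1+m2+m3+1:ℕ):ℝ)/Real.exp 1)^(m1+m2+m3+1) ≠ 0 := by positivity
  obtain ⟨d, hgd⟩ : ∃ d, Real.sqrt ((m1+m2+m3+1:ℕ):ℝ) = d := ⟨_, rfl⟩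
  rw [hgd] at rM eM ⊢
  rw [← eM]
  field_simp
  ring_nf

/-- Uniform convergence, in the bulk, of the split-size probabilities to the
Dirichlet(1/2,1/2,1/2) density. -/
theorem splitProb_dirichlet_uniform (ε : ℝ) (hε0 : 0 < ε) (hε : ε < 1 / 3) :
    ∀ δ > 0, ∃ M : ℕ, ∀ m ≥ M, ∀ m1 m2 m3 : ℕ,
      0 < m1 → 0 < m2 → 0 < m3 → m1 + m2 + m3 = m - 1 →
      ε * m ≤ (m1 : ℝ) → ε * m ≤ (m2 : ℝ) → ε * m ≤ (m3 : ℝ) →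
      |splitProb m m1 m2 m3 * (2 * Real.pi) * (m : ℝ) ^ 2 *
          Real.sqrt ((m1 : ℝ) * (m2 : ℝ) * (m3 : ℝ) / (m : ℝ) ^ 3) - 1| < δ := by
  by_contra hcon
  push_neg at hcon
  obtain ⟨δ, hδ, H⟩ := hcon
  choose mf hmf m1f m2f m3f hp1 hp2 hp3 hsum he1 he2 he3 habs using H
  have hmtop : Tendsto mf atTop atTop := tendsto_atTop_mono hmf tendsto_id
  have hcast : Tendsto (fun k => (mf k : ℝ)) atTop atTop :=
    tendsto_natCast_atTop_atTop.comp hmtop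
  have hεm : Tendsto (fun k => ε * (mf k : ℝ)) atTop atTop := hcast.const_mul_atTop hε0
  have h1 : Tendsto m1f atTop atTop :=
    tendsto_natCast_atTop_iff.mp (tendsto_atTop_mono he1 hεm)
  have h2 : Tendsto m2f atTop atTop :=
    tendsto_natCast_atTop_iff.mp (tendsto_atTop_mono he2 hεm)
  have h3 : Tendsto m3f atTop atTop :=
    tendsto_natCast_atTop_iff.mp (tendsto_atTop_mono he3 hεm)
  have hdbl : ∀ f : ℕ → ℕ, Tendsto f atTop atTop → Tendsto (fun k => 2 * f k) atTop atTop :=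
    fun f hf => tendsto_atTop_mono (fun k => by omega) hf
  have hs : Tendsto s atTop (nhds (Real.sqrt π)) := Stirling.tendsto_stirlingSeq_sqrt_pi
  have hG : Tendsto (fun k => π * (s (mf k))^2 *
      (s (2*m1f k) * s (2*m2f k) * s (2*m3f k)) /
      (s (2*mf k) * ((s (m1f k))^2 * (s (m2f k))^2 * (s (m3f k))^2))) atTop
      (nhds (π * (Real.sqrt π)^2 * (Real.sqrt π * Real.sqrt π * Real.sqrt π) /
        (Real.sqrt π * ((Real.sqrt π)^2 * (Real.sqrt π)^2 * (Real.sqrt π)^2)))) := by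
    apply Tendsto.div
    · exact (tendsto_const_nhds.mul ((hs.comp hmtop).pow 2)).mul
        (((hs.comp (hdbl _ h1)).mul (hs.comp (hdbl _ h2))).mul (hs.comp (hdbl _ h3)))
    · exact (hs.comp (hdbl _ hmtop)).mul
        ((((hs.comp h1).pow 2).mul ((hs.comp h2).pow 2)).mul ((hs.comp h3).pow 2))
    · have hπ : (0:ℝ) < Real.sqrt π := Real.sqrt_pos.2 pi_pos
      positivity
  have hV : π * (Real.sqrt π)^2 * (Real.sqrt π * Real.sqrt π * Real.sqrt π) /
      (Real.sqrt π * ((Real.sqrt π)^2 * (Real.sqrt π)^2 * (Real.sqrt π)^2)) = 1 := by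
    have h : Real.sqrt π ^ 2 = π := Real.sq_sqrt pi_pos.le
    have h0 : Real.sqrt π ≠ 0 := by positivity
    field_simp
    ring_nf
    exact h.symm
  rw [hV] at hG
  have hev : ∀ᶠ k in atTop, |π * (s (mf k))^2 *
      (s (2*m1f k) * s (2*m2f k) * s (2*m3f k)) /
      (s (2*mf k) * ((s (m1f k))^2 * (s (m2f k))^2 * (s (m3f k))^2)) - 1| < δ := by
    have := Metric.tendsto_atTop.mp hG δ hδ
    obtain ⟨N, hN⟩ := this
    exact eventually_atTop.2 ⟨N, fun k hk => by
      have := hN k hk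
      rwa [Real.dist_eq] at this⟩
  obtain ⟨k, hk⟩ := hev.exists
  have hmk : mf k = m1f k + m2f k + m3f k + 1 := by
    have := hsum k; have := hp1 k; have := hp2 k; have := hp3 k; omega
  have habk := habs k
  rw [hmk] at habk hk
  rw [key _ _ _ (hp1 k) (hp2 k) (hp3 k)] at habk
  linarith
end

section
/- Fix β ∈ (0, 1) and ε ∈ (0, 1/2). For positive integers m and a, a′ ≤ m, let M_{m,a,a′} denote a hypergeometric random variable with P(M_{m,a,a′} = j) = C(a, j) · C(m − a, a′ − j) / C(m, a′) for max(0, a + a′ − m) ≤ j ≤ min(a, a′). Then, as m → ∞, the supremum over all integers a, a′ with εm ≤ a ≤ (1−ε)m and εm ≤ a′ ≤ (1−ε)m of | E[(M_{m,a,a′})^β] / (a a′ / m)^β − 1 | tends to 0. -/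
open Finset Real

/-- The `β`-th moment `E[M^β]` of the hypergeometric distribution with parameters
`(m, a, a')`, with the convention `0^β = 0` (valid for `β > 0` via `rpow`). -/
noncomputable def hypMoment (m a a' : ℕ) (β : ℝ) : ℝ :=
  ∑ j ∈ Finset.range (min a a' + 1),
    (j : ℝ) ^ β * ((a.choose j * (m - a).choose (a' - j) : ℕ) : ℝ) / (m.choose a' : ℝ)

private lemma hyp_vand (a b k : ℕ) :
    ∑ j ∈ range (k+1), a.choose j * b.choose (k - j) = (a+b).choose k := by
  rw [Nat.add_choose_eq, Finset.Nat.sum_antidiagonal_eq_sum_range_succ_mk]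

private lemma hyp_sum1 (a b k : ℕ) :
    ∑ j ∈ range (k+1+1), j * ((a+1).choose j * b.choose (k+1 - j))
      = (a+1) * (a+b).choose k := by
  rw [Finset.sum_range_succ']
  simp only [Nat.zero_eq, Nat.choose_zero_right, Nat.zero_mul, add_zero]
  rw [← hyp_vand a b k, Finset.mul_sum]
  apply Finset.sum_congr rfl
  intro i hi
  have h : (a+1) * a.choose i = (a+1).choose (i+1) * (i+1) := Nat.add_one_mul_choose_eq a i
  have hk : k + 1 - (i+1) = k - i := by omega
  rw [hk]
  calc (i+1) * ((a+1).choose (i+1) * b.choose (k-i))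
      = ((a+1).choose (i+1) * (i+1)) * b.choose (k-i) := by ring
    _ = ((a+1) * a.choose i) * b.choose (k-i) := by rw [h]
    _ = (a+1) * (a.choose i * b.choose (k-i)) := by ring

private lemma hyp_sum2 (a b k : ℕ) :
    ∑ j ∈ range (k+2+1), j * (j-1) * ((a+2).choose j * b.choose (k+2 - j))
      = (a+2) * (a+1) * (a+b).choose k := by
  rw [Finset.sum_range_succ', Finset.sum_range_succ']
  norm_num
  rw [← hyp_vand a b k, Finset.mul_sum]
  apply Finset.sum_congr rfl
  intro i hi
  have h1 : (a+2) * (a+1).choose (i+1) = (a+2).choose (i+2) * (i+2) :=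
    Nat.add_one_mul_choose_eq (a+1) (i+1)
  have h2 : (a+1) * a.choose i = (a+1).choose (i+1) * (i+1) := Nat.add_one_mul_choose_eq a i
  have hk : k + 2 - (i+1+1) = k - i := by omega
  rw [hk]
  calc (i+1+1) * (i+1+1-1) * ((a+2).choose (i+2) * b.choose (k-i))
      = ((a+2).choose (i+2) * (i+2)) * (i+1) * b.choose (k-i) := by
        simp; ring
    _ = ((a+2) * ((a+1).choose (i+1) * (i+1))) * b.choose (k-i) := by rw [← h1]; ring
    _ = ((a+2) * ((a+1) * a.choose i)) * b.choose (k-i) := by rw [h2]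
    _ = (a+2) * (a+1) * (a.choose i * b.choose (k-i)) := by ring

private lemma hyp_sum0' (m a a' : ℕ) (ha : a ≤ m) :
    ∑ j ∈ range (a'+1), a.choose j * (m-a).choose (a'-j) = m.choose a' := by
  have h := hyp_vand a (m-a) a'
  rwa [Nat.add_sub_cancel' ha] at h

private lemma hyp_sum1' (m a a' : ℕ) (ha : 1 ≤ a) (ham : a ≤ m) (ha' : 1 ≤ a') :
    ∑ j ∈ range (a'+1), j * (a.choose j * (m-a).choose (a'-j))
      = a * (m-1).choose (a'-1) := by
  obtain ⟨a₀, rfl⟩ : ∃ c, a = c + 1 := ⟨a-1, by omega⟩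
  obtain ⟨k, rfl⟩ : ∃ c, a' = c + 1 := ⟨a'-1, by omega⟩
  have h := hyp_sum1 a₀ (m-(a₀+1)) k
  have h2 : a₀ + (m - (a₀+1)) = m - 1 := by omega
  rw [h2] at h
  simpa using h

private lemma hyp_sum2' (m a a' : ℕ) (ha : 2 ≤ a) (ham : a ≤ m) (ha' : 2 ≤ a') :
    ∑ j ∈ range (a'+1), j * (j-1) * (a.choose j * (m-a).choose (a'-j))
      = a * (a-1) * (m-2).choose (a'-2) := by
  obtain ⟨a₀, rfl⟩ : ∃ c, a = c + 2 := ⟨a-2, by omega⟩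
  obtain ⟨k, rfl⟩ : ∃ c, a' = c + 2 := ⟨a'-2, by omega⟩
  have h := hyp_sum2 a₀ (m-(a₀+2)) k
  have h2 : a₀ + (m - (a₀+2)) = m - 2 := by omega
  rw [h2] at h
  simpa using h

private lemma hyp_idm1 (m a' : ℕ) (hm : 1 ≤ m) (ha' : 1 ≤ a') :
    m * (m-1).choose (a'-1) = a' * m.choose a' := by
  obtain ⟨m₀, rfl⟩ : ∃ c, m = c + 1 := ⟨m-1, by omega⟩
  obtain ⟨k, rfl⟩ : ∃ c, a' = c + 1 := ⟨a'-1, by omega⟩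
  simpa [mul_comm] using Nat.add_one_mul_choose_eq m₀ k

private lemma hyp_idm2 (m a' : ℕ) (hm : 2 ≤ m) (ha' : 2 ≤ a') :
    m * (m-1) * (m-2).choose (a'-2) = a' * (a'-1) * m.choose a' := by
  have h1 : (m-1) * (m-2).choose (a'-2) = (a'-1) * (m-1).choose (a'-1) := by
    have := hyp_idm1 (m-1) (a'-1) (by omega) (by omega)
    have e1 : m - 1 - 1 = m - 2 := by omega
    have e2 : a' - 1 - 1 = a' - 2 := by omega
    rwa [e1, e2] at this
  have h2 : m * (m-1).choose (a'-1) = a' * m.choose a' :=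
    hyp_idm1 m a' (by omega) (by omega)
  calc m * (m-1) * (m-2).choose (a'-2) = m * ((m-1) * (m-2).choose (a'-2)) := by ring
    _ = m * ((a'-1) * (m-1).choose (a'-1)) := by rw [h1]
    _ = (a'-1) * (m * (m-1).choose (a'-1)) := by ring
    _ = (a'-1) * (a' * m.choose a') := by rw [h2]
    _ = a' * (a'-1) * m.choose a' := by ring

private lemma hyp_tangent {β : ℝ} (hβ0 : 0 ≤ β) (hβ1 : β ≤ 1) {x μ : ℝ}
    (hx : 0 ≤ x) (hμ : 0 < μ) :
    x ^ β ≤ μ ^ β * (1 - β) + μ ^ β * β / μ * x := by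
  have hxμ : 0 ≤ x / μ := div_nonneg hx hμ.le
  have hs : -1 ≤ x / μ - 1 := by linarith
  have hb := rpow_one_add_le_one_add_mul_self hs hβ0 hβ1
  rw [show (1 + (x/μ - 1)) = x/μ by ring] at hb
  have hxx : μ * (x/μ) = x := by field_simp
  calc x ^ β = (μ * (x/μ)) ^ β := by rw [hxx]
    _ = μ ^ β * (x/μ) ^ β := Real.mul_rpow hμ.le hxμ
    _ ≤ μ ^ β * (1 + β * (x/μ - 1)) :=
        mul_le_mul_of_nonneg_left hb (Real.rpow_nonneg hμ.le β)
    _ = μ ^ β * (1 - β) + μ ^ β * β / μ * x := by field_simp; ring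

private lemma hyp_prod_bound {X Y : ℝ} (hX : 1 ≤ X) (hY : 1 ≤ Y) :
    X*(X-1)*Y*(Y-1) ≤ (X*Y)^2 := by
  nlinarith [mul_nonneg (mul_nonneg (by linarith : (0:ℝ) ≤ X) (by linarith : (0:ℝ) ≤ Y))
    (by linarith : (0:ℝ) ≤ X + Y - 1)]

private lemma hyp_var_bound {u Z : ℝ} (hu0 : 0 ≤ u) (hZ : 0 ≤ Z) (h : u ≤ 2*(Z-1)) :
    u^2 * Z^2 ≤ (u^2 + 2*u) * (Z * (Z-1)) := by
  nlinarith [mul_nonneg (mul_nonneg hu0 hZ) (sub_nonneg.2 h)]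

private lemma hyp_cast_jj (j : ℕ) : ((j * (j-1) : ℕ) : ℝ) = (j:ℝ) * ((j:ℝ) - 1) := by
  cases j with
  | zero => simp
  | succ n => push_cast [Nat.succ_sub_one]; ring

set_option maxHeartbeats 1000000 in
/-- Uniform convergence of hypergeometric `β`-th moments to `(aa'/m)^β` in the bulk:
for `εm ≤ a, a' ≤ (1-ε)m`, `E[M_{m,a,a'}^β] = (1+o(1)) (aa'/m)^β` uniformly. -/
theorem hypergeometric_moment_uniform (β : ℝ) (hβ0 : 0 < β) (hβ1 : β < 1)
    (ε : ℝ) (hε0 : 0 < ε) (hε : ε < 1 / 2) :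
    ∀ δ > 0, ∃ M : ℕ, ∀ m ≥ M, ∀ a a' : ℕ,
      ε * m ≤ (a : ℝ) → (a : ℝ) ≤ (1 - ε) * m →
      ε * m ≤ (a' : ℝ) → (a' : ℝ) ≤ (1 - ε) * m →
      |hypMoment m a a' β / ((a : ℝ) * (a' : ℝ) / (m : ℝ)) ^ β - 1| < δ := by
  classical
  intro δ hδ
  set δ₀ : ℝ := min δ 1 with hδ₀def
  have hδ₀0 : 0 < δ₀ := lt_min hδ one_pos
  have hδ₀1 : δ₀ ≤ 1 := min_le_right _ _
  have hδ₀δ : δ₀ ≤ δ := min_le_left _ _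
  set θ : ℝ := δ₀ / 3 with hθdef
  have hθ0 : 0 < θ := by positivity
  have hθ3 : θ ≤ 1/3 := by rw [hθdef]; linarith
  obtain ⟨M0, hM0⟩ := exists_nat_gt (max (3/(θ^3*ε^2)) (2/ε + 2))
  refine ⟨M0, fun m hm a a' ha1 ha2 hb1 hb2 => ?_⟩
  have hmR : (M0:ℝ) ≤ m := Nat.cast_le.2 hm
  have hmbig : max (3/(θ^3*ε^2)) (2/ε + 2) < (m:ℝ) := lt_of_lt_of_le hM0 hmR
  have hm2e : 2/ε + 2 < (m:ℝ) := lt_of_le_of_lt (le_max_right _ _) hmbig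
  have hm3 : 3/(θ^3*ε^2) < (m:ℝ) := lt_of_le_of_lt (le_max_left _ _) hmbig
  have hε2 : (2:ℝ) < 2/ε := by
    rw [lt_div_iff₀ hε0]; linarith
  have hm4 : (4:ℝ) < m := by linarith
  have hm0 : (0:ℝ) < m := by linarith
  have hεm2 : (2:ℝ) < ε * m := by
    have : 2/ε < m := by linarith
    calc (2:ℝ) = ε * (2/ε) := by field_simp
      _ < ε * m := by apply mul_lt_mul_of_pos_left this hε0
  have haR2 : (2:ℝ) < (a:ℝ) := lt_of_lt_of_le hεm2 ha1
  have hbR2 : (2:ℝ) < (a':ℝ) := lt_of_lt_of_le hεm2 hb1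
  have ha0 : (0:ℝ) < a := by linarith
  have hb0 : (0:ℝ) < a' := by linarith
  have haN2 : 2 ≤ a := by exact_mod_cast haR2.le
  have hbN2 : 2 ≤ a' := by exact_mod_cast hbR2.le
  have hεm0 : (0:ℝ) ≤ ε * m := by positivity
  have haRm : (a:ℝ) ≤ m := by linarith
  have hbRm : (a':ℝ) ≤ m := by linarith
  have haNm : a ≤ m := by exact_mod_cast haRm
  have hbNm : a' ≤ m := by exact_mod_cast hbRm
  have hmN2 : 2 ≤ m := by omega
  -- set up the probability mass function
  set c : ℝ := (m.choose a' : ℝ) with hcdef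
  have hc : 0 < c := by rw [hcdef]; exact_mod_cast Nat.choose_pos hbNm
  set p : ℕ → ℝ := fun j => ((a.choose j * (m - a).choose (a' - j) : ℕ) : ℝ) / c with hpdef
  have hp0 : ∀ j, 0 ≤ p j := fun j => div_nonneg (Nat.cast_nonneg _) hc.le
  set μ : ℝ := (a:ℝ) * (a':ℝ) / m with hμdef
  have hμ0 : 0 < μ := by positivity
  have hμZ : μ * m = (a:ℝ) * a' := by rw [hμdef]; field_simp
  have hμm : μ ≤ m := by
    rw [hμdef, div_le_iff₀ hm0]
    exact mul_le_mul haRm hbRm hb0.le hm0.le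
  have hμε : ε^2 * m ≤ μ := by
    rw [hμdef, le_div_iff₀ hm0]
    calc ε^2 * m * m = (ε*m) * (ε*m) := by ring
      _ ≤ (a:ℝ) * (a':ℝ) := mul_le_mul ha1 hb1 hεm0 ha0.le
  -- key sums
  have hs0 : ∑ j ∈ range (a'+1), p j = 1 := by
    simp only [hpdef]
    rw [← Finset.sum_div]
    rw [div_eq_one_iff_eq hc.ne']
    rw [hcdef]
    exact_mod_cast congrArg (Nat.cast : ℕ → ℝ) (hyp_sum0' m a a' haNm)
  have hs1 : ∑ j ∈ range (a'+1), (j:ℝ) * p j = μ := by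
    have hnat := hyp_sum1' m a a' (by omega) haNm (by omega)
    have hid := hyp_idm1 m a' (by omega) (by omega)
    have hcast : ∑ j ∈ range (a'+1), (j:ℝ) * p j
        = ((a * (m-1).choose (a'-1) : ℕ) : ℝ) / c := by
      rw [← hnat, Nat.cast_sum, Finset.sum_div]
      apply Finset.sum_congr rfl
      intro j hj
      simp only [hpdef]
      push_cast
      ring
    rw [hcast, hμdef, div_eq_div_iff hc.ne' hm0.ne']
    have hthis : ((m * ((m-1).choose (a'-1)) : ℕ) : ℝ) = ((a' * m.choose a' : ℕ) : ℝ) := by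
      exact_mod_cast congrArg (Nat.cast : ℕ → ℝ) hid
    push_cast at hthis ⊢
    linear_combination (a:ℝ) * hthis
  have hs2 : ∑ j ∈ range (a'+1), (j:ℝ) * ((j:ℝ) - 1) * p j
      = (a:ℝ) * ((a:ℝ)-1) * (a':ℝ) * ((a':ℝ)-1) / ((m:ℝ) * ((m:ℝ)-1)) := by
    have hnat := hyp_sum2' m a a' haN2 haNm hbN2
    have hid := hyp_idm2 m a' hmN2 hbN2
    have hm1 : (0:ℝ) < (m:ℝ) * ((m:ℝ)-1) := mul_pos hm0 (by linarith)
    have hcast : ∑ j ∈ range (a'+1), (j:ℝ) * ((j:ℝ)-1) * p j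
        = ((a * (a-1) * (m-2).choose (a'-2) : ℕ) : ℝ) / c := by
      rw [← hnat]
      rw [Nat.cast_sum, Finset.sum_div]
      apply Finset.sum_congr rfl
      intro j hj
      simp only [hpdef]
      rcases Nat.eq_zero_or_pos j with hj0 | hj1
      · subst hj0; simp
      · have hjc : ((j - 1 : ℕ) : ℝ) = (j:ℝ) - 1 := by
          push_cast [Nat.cast_sub hj1]; ring
        push_cast [hjc]
        ring
    rw [hcast, div_eq_div_iff hc.ne' hm1.ne']
    have hidR : ((m * (m-1) * ((m-2).choose (a'-2)) : ℕ) : ℝ)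
        = ((a' * (a'-1) * m.choose a' : ℕ) : ℝ) := by
      exact_mod_cast congrArg (Nat.cast : ℕ → ℝ) hid
    push_cast [Nat.cast_sub (by omega : 1 ≤ m), Nat.cast_sub (by omega : 1 ≤ a'),
      Nat.cast_sub (by omega : 1 ≤ a)] at hidR ⊢
    linear_combination ((a:ℝ)*((a:ℝ)-1)) * hidR
  -- hypMoment as a sum against p
  have hE : hypMoment m a a' β = ∑ j ∈ range (a'+1), (j:ℝ)^β * p j := by
    rw [hypMoment]
    rw [Finset.sum_subset (Finset.range_subset_range.2 (by omega : min a a' + 1 ≤ a' + 1))]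
    · apply Finset.sum_congr rfl
      intro j hj
      rw [hpdef, mul_div_assoc]
    · intro j hj hj2
      rw [Finset.mem_range] at hj hj2
      have hja : a < j := by omega
      simp [Nat.choose_eq_zero_of_lt hja]
  -- upper bound
  have hub : hypMoment m a a' β ≤ μ ^ β := by
    rw [hE]
    have hle : ∑ j ∈ range (a'+1), (j:ℝ)^β * p j
        ≤ ∑ j ∈ range (a'+1), ((μ^β * (1-β)) * p j + (μ^β * β / μ) * ((j:ℝ) * p j)) := by
      apply Finset.sum_le_sum
      intro j hj
      have ht := hyp_tangent hβ0.le hβ1.le (Nat.cast_nonneg j : (0:ℝ) ≤ j) hμ0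
      have := mul_le_mul_of_nonneg_right ht (hp0 j)
      calc (j:ℝ)^β * p j ≤ (μ^β * (1-β) + μ^β * β / μ * (j:ℝ)) * p j := this
        _ = (μ^β * (1-β)) * p j + (μ^β * β / μ) * ((j:ℝ) * p j) := by ring
    rw [Finset.sum_add_distrib, ← Finset.mul_sum, ← Finset.mul_sum, hs0, hs1] at hle
    calc ∑ j ∈ range (a'+1), (j:ℝ)^β * p j
        ≤ μ^β * (1-β) * 1 + μ^β * β / μ * μ := hle
      _ = μ^β := by field_simp; ring
  -- variance bound
  have hV : ∑ j ∈ range (a'+1), ((j:ℝ) - μ)^2 * p j ≤ 3 * μ := by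
    have hexp : ∀ j ∈ range (a'+1), ((j:ℝ) - μ)^2 * p j
        = (j:ℝ) * ((j:ℝ)-1) * p j + (1 - 2*μ) * ((j:ℝ) * p j) + μ^2 * p j := by
      intro j _; ring
    rw [Finset.sum_congr rfl hexp]
    rw [Finset.sum_add_distrib, Finset.sum_add_distrib, ← Finset.mul_sum, ← Finset.mul_sum,
      hs0, hs1, hs2]
    -- A + (1-2μ)μ + μ² ≤ 3μ  i.e. A ≤ μ² + 2μ
    have hm1 : (0:ℝ) < (m:ℝ) - 1 := by linarith
    have hA : (a:ℝ) * ((a:ℝ)-1) * (a':ℝ) * ((a':ℝ)-1) / ((m:ℝ) * ((m:ℝ)-1))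
        ≤ μ^2 + 2*μ := by
      rw [div_le_iff₀ (by positivity : (0:ℝ) < (m:ℝ) * ((m:ℝ)-1))]
      have hXY : (a:ℝ) * ((a:ℝ)-1) * (a':ℝ) * ((a':ℝ)-1) ≤ ((a:ℝ)*(a':ℝ))^2 :=
        hyp_prod_bound (by linarith) (by linarith)
      have hXY2 : ((a:ℝ)*(a':ℝ))^2 = μ^2 * (m:ℝ)^2 := by
        rw [← hμZ]; ring
      have hfin : μ^2 * (m:ℝ)^2 ≤ (μ^2 + 2*μ) * ((m:ℝ) * ((m:ℝ)-1)) :=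
        hyp_var_bound hμ0.le hm0.le (by linarith)
      linarith
    linarith [hA]
  -- Chebyshev
  set P : ℕ → Prop := fun j => (1-θ)*μ ≤ (j:ℝ) with hPdef
  have hsplit := Finset.sum_filter_add_sum_filter_not (range (a'+1)) P p
  have hcheb : ∑ j ∈ (range (a'+1)).filter (fun j => ¬ P j), p j ≤ 3 / (θ^2 * μ) := by
    have hθμ : (0:ℝ) < θ * μ := by positivity
    have step1 : ∑ j ∈ (range (a'+1)).filter (fun j => ¬ P j), p j
        ≤ ∑ j ∈ (range (a'+1)).filter (fun j => ¬ P j),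
            (((j:ℝ) - μ)^2 / (θ*μ)^2) * p j := by
      apply Finset.sum_le_sum
      intro j hj
      rw [Finset.mem_filter] at hj
      have hjlt : (j:ℝ) < (1-θ)*μ := not_le.mp hj.2
      have hgap : θ * μ < μ - (j:ℝ) := by linarith
      have h1 : (θ*μ)^2 ≤ ((j:ℝ) - μ)^2 := by
        have := pow_le_pow_left₀ hθμ.le hgap.le 2
        calc (θ*μ)^2 ≤ (μ - (j:ℝ))^2 := this
          _ = ((j:ℝ) - μ)^2 := by ring
      have h2 : (1:ℝ) ≤ ((j:ℝ) - μ)^2 / (θ*μ)^2 := by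
        rw [le_div_iff₀ (by positivity)]; linarith
      calc p j = 1 * p j := (one_mul _).symm
        _ ≤ (((j:ℝ) - μ)^2 / (θ*μ)^2) * p j := mul_le_mul_of_nonneg_right h2 (hp0 j)
    have step2 : ∑ j ∈ (range (a'+1)).filter (fun j => ¬ P j),
            (((j:ℝ) - μ)^2 / (θ*μ)^2) * p j
        ≤ (1/(θ*μ)^2) * ∑ j ∈ range (a'+1), ((j:ℝ) - μ)^2 * p j := by
      rw [Finset.mul_sum]
      apply Finset.sum_le_sum_of_subset_of_nonneg (Finset.filter_subset _ _) ?_ |>.trans_eq ?_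
      · intro j _ _
        positivity
      · apply Finset.sum_congr rfl
        intro j _
        ring
    have step3 : (1/(θ*μ)^2) * ∑ j ∈ range (a'+1), ((j:ℝ) - μ)^2 * p j
        ≤ (1/(θ*μ)^2) * (3*μ) := by
      apply mul_le_mul_of_nonneg_left hV (by positivity)
    have heq : (1/(θ*μ)^2) * (3*μ) = 3 / (θ^2 * μ) := by
      field_simp
    linarith
  have hsmall : 3 / (θ^2 * μ) < θ := by
    rw [div_lt_iff₀ (by positivity)]
    have hμ3 : 3 / θ^3 < μ := by
      have h1 : 3/(θ^3*ε^2) * ε^2 < (m:ℝ) * ε^2 := by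
        apply mul_lt_mul_of_pos_right hm3 (by positivity)
      have h2 : 3/(θ^3*ε^2) * ε^2 = 3/θ^3 := by field_simp
      calc 3/θ^3 = 3/(θ^3*ε^2) * ε^2 := h2.symm
        _ < (m:ℝ) * ε^2 := h1
        _ = ε^2 * m := by ring
        _ ≤ μ := hμε
    calc (3:ℝ) = (3/θ^3) * θ^3 := by field_simp
      _ < μ * θ^3 := by apply mul_lt_mul_of_pos_right hμ3 (by positivity)
      _ = θ * (θ^2 * μ) := by ring
  -- lower bound
  have hBsum : 1 - θ ≤ ∑ j ∈ (range (a'+1)).filter P, p j := by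
    linarith [hsplit, hcheb, hsmall]
  have hlb : (1-θ)^β * μ^β * (1 - θ) ≤ hypMoment m a a' β := by
    have h1θ : (0:ℝ) < 1 - θ := by linarith
    have hbase : (0:ℝ) ≤ (1-θ)*μ := by positivity
    have hBle : ∑ j ∈ (range (a'+1)).filter P, ((1-θ)*μ)^β * p j
        ≤ ∑ j ∈ (range (a'+1)).filter P, (j:ℝ)^β * p j := by
      apply Finset.sum_le_sum
      intro j hj
      rw [Finset.mem_filter] at hj
      have : ((1-θ)*μ)^β ≤ (j:ℝ)^β := Real.rpow_le_rpow hbase hj.2 hβ0.le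
      exact mul_le_mul_of_nonneg_right this (hp0 j)
    have hsub : ∑ j ∈ (range (a'+1)).filter P, (j:ℝ)^β * p j
        ≤ ∑ j ∈ range (a'+1), (j:ℝ)^β * p j := by
      apply Finset.sum_le_sum_of_subset_of_nonneg (Finset.filter_subset _ _)
      intro j _ _
      exact mul_nonneg (Real.rpow_nonneg (Nat.cast_nonneg j) β) (hp0 j)
    have hfactor : ((1-θ)*μ)^β * (1-θ) ≤ ((1-θ)*μ)^β * ∑ j ∈ (range (a'+1)).filter P, p j := by
      apply mul_le_mul_of_nonneg_left hBsum (Real.rpow_nonneg hbase β)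
    have hmulrpow : ((1-θ)*μ)^β = (1-θ)^β * μ^β := Real.mul_rpow h1θ.le hμ0.le
    rw [hE]
    calc (1-θ)^β * μ^β * (1-θ) = ((1-θ)*μ)^β * (1-θ) := by rw [hmulrpow]
      _ ≤ ((1-θ)*μ)^β * ∑ j ∈ (range (a'+1)).filter P, p j := hfactor
      _ = ∑ j ∈ (range (a'+1)).filter P, ((1-θ)*μ)^β * p j := by rw [Finset.mul_sum]
      _ ≤ ∑ j ∈ (range (a'+1)).filter P, (j:ℝ)^β * p j := hBle
      _ ≤ ∑ j ∈ range (a'+1), (j:ℝ)^β * p j := hsub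
  -- conclude
  have hμβ : (0:ℝ) < μ ^ β := Real.rpow_pos_of_pos hμ0 β
  have h1θ : (0:ℝ) < 1 - θ := by linarith
  have hpow : 1 - θ ≤ (1-θ)^β := by
    have := Real.rpow_le_rpow_of_exponent_ge h1θ (by linarith : (1:ℝ)-θ ≤ 1) hβ1.le
    rwa [Real.rpow_one] at this
  set r : ℝ := hypMoment m a a' β / μ ^ β with hrdef
  have hr1 : r ≤ 1 := by
    rw [hrdef, div_le_one hμβ]
    exact hub
  have hr2 : (1-θ) * (1-θ) ≤ r := by
    rw [hrdef, le_div_iff₀ hμβ]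
    have hstep : (1-θ)*(1-θ) * μ^β ≤ (1-θ)^β * (1-θ) * μ^β := by
      apply mul_le_mul_of_nonneg_right _ hμβ.le
      exact mul_le_mul_of_nonneg_right hpow (by linarith)
    calc (1-θ)*(1-θ) * μ^β ≤ (1-θ)^β * (1-θ) * μ^β := hstep
      _ = (1-θ)^β * μ^β * (1-θ) := by ring
      _ ≤ hypMoment m a a' β := hlb
  have : |r - 1| < δ := by
    rw [abs_sub_comm, abs_of_nonneg (by linarith : (0:ℝ) ≤ 1 - r)]
    have : 1 - r ≤ 1 - (1-θ)*(1-θ) := by linarith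
    have h2 : 1 - (1-θ)*(1-θ) = 2*θ - θ^2 := by ring
    have h3 : 2*θ - θ^2 < 3*θ := by linarith [sq_nonneg θ]
    have h4 : 3*θ = δ₀ := by rw [hθdef]; ring
    linarith
  exact this
end

section
/- Fix β > 0. Then, as m → ∞, the sum over all ordered triples (m1, m2, m3) of non-negative integers with m1 + m2 + m3 = m − 1 of p_m(m1, m2, m3) · (m1/m)^β converges to 1/(1 + 2β). -/
open Filter Finset Real

noncomputable def DD : ℕ → ℝ := fun k => ((2 * k - 1).doubleFactorial : ℝ)

lemma DD_zero : DD 0 = 1 := by simp [DD]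

lemma DD_succ (k : ℕ) : DD (k + 1) = (2 * k + 1) * DD k := by
  cases k with
  | zero => simp [DD, Nat.doubleFactorial]
  | succ k =>
      have h1 : 2 * (k + 1 + 1) - 1 = (2 * (k + 1) - 1) + 2 := by omega
      rw [DD, DD, h1, Nat.doubleFactorial_add_two]
      push_cast
      have : (2 * (k + 1) - 1 : ℕ) = (2 * (k+1) - 1 : ℕ) := rfl
      have h2 : ((2 * (k + 1) - 1 : ℕ) : ℝ) = 2 * (k+1) - 1 := by
        push_cast [Nat.cast_sub (by omega : 1 ≤ 2 * (k+1))]; ring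
      rw [h2]; ring_nf

lemma DD_pos (k : ℕ) : 0 < DD k := by
  induction k with
  | zero => simp [DD_zero]
  | succ k ih => rw [DD_succ]; positivity

lemma conv2 (j : ℕ) :
    ∑ i ∈ range (j+1), (j.choose i : ℝ) * DD i * DD (j-i) = 2^j * (j.factorial : ℝ) := by
  induction j with
  | zero => simp [DD_zero]
  | succ j ih =>
    have hA : ∑ i ∈ range (j+1), (j.choose i : ℝ) * DD i * DD (j+1-i)
        = (∑ i ∈ range (j+1), (j.choose (i+1) : ℝ) * DD (i+1) * DD (j-i)) + DD (j+1) := by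
      rw [Finset.sum_range_succ' (fun i => (j.choose i : ℝ) * DD i * DD (j+1-i)) j]
      rw [Finset.sum_range_succ (fun i => (j.choose (i+1) : ℝ) * DD (i+1) * DD (j-i)) j]
      simp [Nat.succ_sub_succ_eq_sub, DD_zero, Nat.choose_succ_self]
    rw [Finset.sum_range_succ' (fun i => (((j+1).choose i : ℕ) : ℝ) * DD i * DD (j+1-i)) (j+1)]
    simp only [Nat.succ_sub_succ_eq_sub, Nat.choose_succ_succ, Nat.choose_zero_right,
      Nat.cast_add, Nat.cast_one, DD_zero]
    have expand : ∀ i ∈ range (j+1),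
        ((j.choose i : ℝ) + (j.choose (i+1) : ℝ)) * DD (i+1) * DD (j-i)
        = ((j.choose i : ℝ) * DD (i+1) * DD (j-i)) + (j.choose (i+1) : ℝ) * DD (i+1) * DD (j-i) := by
      intro i _; ring
    rw [Finset.sum_congr rfl expand, Finset.sum_add_distrib]
    have key : ∀ i ∈ range (j+1),
        (j.choose i : ℝ) * DD (i+1) * DD (j-i) + (j.choose i : ℝ) * DD i * DD (j+1-i)
        = (2*(j:ℝ)+2) * ((j.choose i : ℝ) * DD i * DD (j-i)) := by
      intro i hi
      have hij : i ≤ j := by simpa [Nat.lt_succ_iff] using hi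
      have h3 : j + 1 - i = (j - i) + 1 := by omega
      rw [h3, DD_succ, DD_succ]
      have h4 : ((j - i : ℕ) : ℝ) = (j:ℝ) - i := by
        push_cast [Nat.cast_sub hij]; ring
      rw [h4]; ring
    have : (∑ i ∈ range (j+1), (j.choose i : ℝ) * DD (i+1) * DD (j-i))
        + ((∑ i ∈ range (j+1), (j.choose (i+1) : ℝ) * DD (i+1) * DD (j-i)) + 1 * 1 * DD (j+1))
        = ∑ i ∈ range (j+1), ((j.choose i : ℝ) * DD (i+1) * DD (j-i)
            + (j.choose i : ℝ) * DD i * DD (j+1-i)) := by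
      rw [Finset.sum_add_distrib, hA]; ring
    simp only [Nat.sub_zero] at *
    rw [add_assoc, this, Finset.sum_congr rfl key, ← Finset.mul_sum, ih]
    rw [Nat.factorial_succ]
    push_cast; ring

lemma choose_aux (m n : ℕ) :
    ((m:ℝ)+1) * (m.choose n) = ((m+1-n : ℕ) : ℝ) * ((m+1).choose n) := by
  have h : (m+1) * m.choose n = (m+1-n) * (m+1).choose n := by
    rw [Nat.add_one_mul_choose_eq, Nat.choose_succ_right_eq, mul_comm]
  exact_mod_cast congrArg (fun x : ℕ => (x : ℝ)) h

lemma momId (n : ℕ) : ∀ m : ℕ,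
    (2*(n:ℝ)+1) * ∑ k ∈ range (m+1),
      (k.choose n : ℝ) * ((m.factorial : ℝ) / (k.factorial : ℝ)) * DD k * 2^(m-k)
    = ((m.choose n : ℕ) : ℝ) * DD (m+1) := by
  intro m
  induction m with
  | zero =>
    cases n with
    | zero => simp [DD_zero, DD_succ]
    | succ n => simp [DD_zero, DD_succ]
  | succ m ih =>
    have hsplit : ∀ k ∈ range (m+1),
        (k.choose n : ℝ) * (((m+1).factorial : ℝ)/(k.factorial : ℝ)) * DD k * 2^(m+1-k)
        = (2*((m:ℝ)+1)) * ((k.choose n : ℝ) * ((m.factorial : ℝ)/(k.factorial : ℝ)) * DD k * 2^(m-k)) := by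
      intro k hk
      have hk' : k ≤ m := by simpa [Nat.lt_succ_iff] using hk
      rw [show m+1-k = (m-k)+1 by omega, pow_succ, Nat.factorial_succ]
      push_cast; ring
    rw [Finset.sum_range_succ, Finset.sum_congr rfl hsplit, ← Finset.mul_sum]
    rw [Nat.sub_self, div_self (by exact_mod_cast (m+1).factorial_ne_zero), DD_succ (m+1)]
    by_cases hn : n ≤ m + 1
    · have aux := choose_aux m n
      rw [show ((m+1-n : ℕ) : ℝ) = (m:ℝ)+1-(n:ℝ) by push_cast [Nat.cast_sub hn]; ring] at aux
      push_cast
      linear_combination (2*((m:ℝ)+1)) * ih + 2*DD (m+1) * aux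
    · have h0 : (m+1).choose n = 0 := Nat.choose_eq_zero_of_lt (by omega)
      have h1 : m.choose n = 0 := Nat.choose_eq_zero_of_lt (by omega)
      rw [h1] at ih
      have hS : ∑ k ∈ range (m+1),
          (k.choose n : ℝ) * ((m.factorial : ℝ)/(k.factorial : ℝ)) * DD k * 2^(m-k) = 0 := by
        have h2 : (2*(n:ℝ)+1) ≠ 0 := by positivity
        rw [Nat.cast_zero, zero_mul] at ih
        exact (mul_eq_zero.mp ih).resolve_left h2
      rw [hS, h0]
      simp

lemma treeCount_cast (k : ℕ) : ((treeCount (k+2) : ℕ) : ℝ) = DD k := by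
  have h : 2*(k+2)-5 = 2*k-1 := by omega
  rw [treeCount, h, DD]

noncomputable def W (m k : ℕ) : ℝ :=
  ((m-1).factorial : ℝ) / (k.factorial : ℝ) * DD k * 2^(m-1-k) / DD m

lemma sum_tuple3 (n : ℕ) (f : ℕ → ℕ → ℕ → ℝ) :
    ∑ x ∈ Finset.Nat.antidiagonalTuple 3 n, f (x 0) (x 1) (x 2)
    = ∑ p ∈ Finset.HasAntidiagonal.antidiagonal n, ∑ q ∈ Finset.HasAntidiagonal.antidiagonal p.2, f p.1 q.1 q.2 := by
  rw [← Finset.sum_sigma (Finset.HasAntidiagonal.antidiagonal n) (fun p => Finset.HasAntidiagonal.antidiagonal p.2)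
        (fun y => f y.1.1 y.2.1 y.2.2)]
  refine Finset.sum_nbij' (fun x => ⟨(x 0, x 1 + x 2), (x 1, x 2)⟩)
      (fun y => ![y.1.1, y.2.1, y.2.2]) ?_ ?_ ?_ ?_ ?_
  · intro x hx
    rw [Finset.Nat.mem_antidiagonalTuple, Fin.sum_univ_three] at hx
    simp [Finset.mem_sigma, Finset.mem_antidiagonal, ← hx]; ring
  · intro y hy
    rw [Finset.mem_sigma, Finset.HasAntidiagonal.mem_antidiagonal, Finset.HasAntidiagonal.mem_antidiagonal] at hy
    rw [Finset.Nat.mem_antidiagonalTuple, Fin.sum_univ_three]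
    simp only [Matrix.cons_val_zero, Matrix.cons_val_one, Matrix.head_cons,
      Matrix.cons_val_two, Matrix.tail_cons]
    omega
  · intro x hx
    funext i
    fin_cases i <;> simp
  · intro y hy
    rw [Finset.mem_sigma, Finset.HasAntidiagonal.mem_antidiagonal, Finset.HasAntidiagonal.mem_antidiagonal] at hy
    simp [hy.2]
  · intro x hx
    simp

lemma conv2' (j : ℕ) :
    ∑ q ∈ Finset.HasAntidiagonal.antidiagonal j,
      DD q.1 * DD q.2 / ((q.1.factorial : ℝ) * (q.2.factorial : ℝ)) = 2^j := by
  rw [Finset.Nat.sum_antidiagonal_eq_sum_range_succ_mk]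
  have h : ∀ i ∈ range (j+1),
      DD i * DD (j-i) / ((i.factorial : ℝ) * ((j-i).factorial : ℝ))
      = (j.choose i : ℝ) * DD i * DD (j-i) / (j.factorial : ℝ) := by
    intro i hi
    have hij : i ≤ j := by simpa [Nat.lt_succ_iff] using hi
    rw [Nat.cast_choose ℝ hij]
    have h1 : (i.factorial : ℝ) ≠ 0 := by exact_mod_cast i.factorial_ne_zero
    have h2 : ((j-i).factorial : ℝ) ≠ 0 := by exact_mod_cast (j-i).factorial_ne_zero
    have h3 : (j.factorial : ℝ) ≠ 0 := by exact_mod_cast j.factorial_ne_zero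
    field_simp
  rw [Finset.sum_congr rfl h, ← Finset.sum_div, conv2]
  field_simp
lemma innerSumSplit (m a j : ℕ) :
    ∑ q ∈ Finset.HasAntidiagonal.antidiagonal j, splitProb m a q.1 q.2
    = (m.factorial : ℝ) / (a.factorial : ℝ) * DD a * 2^j / ((m : ℝ) * DD m) := by
  have h : ∀ q ∈ Finset.HasAntidiagonal.antidiagonal j, splitProb m a q.1 q.2
      = ((m.factorial : ℝ) / (a.factorial : ℝ) * DD a / ((m : ℝ) * DD m)) *
        (DD q.1 * DD q.2 / ((q.1.factorial : ℝ) * (q.2.factorial : ℝ))) := by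
    intro q hq
    rw [splitProb]
    rw [show m + 2 = (m : ℕ) + 2 from rfl, treeCount_cast, treeCount_cast, treeCount_cast,
      treeCount_cast]
    ring
  rw [Finset.sum_congr rfl h, ← Finset.mul_sum, conv2']
  ring

lemma sum_eq (β : ℝ) {m : ℕ} (hm : 1 ≤ m) :
    ∑ x ∈ Finset.Nat.antidiagonalTuple 3 (m-1),
      splitProb m (x 0) (x 1) (x 2) * ((x 0 : ℝ) / (m : ℝ)) ^ β
    = ∑ k ∈ range m, W m k * ((k : ℝ)/(m : ℝ))^β := by
  rw [sum_tuple3 (m-1) (fun a b c => splitProb m a b c * ((a : ℝ)/(m : ℝ))^β)]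
  have h : ∀ p ∈ Finset.HasAntidiagonal.antidiagonal (m-1),
      (∑ q ∈ Finset.HasAntidiagonal.antidiagonal p.2, splitProb m p.1 q.1 q.2 * ((p.1 : ℝ)/(m : ℝ))^β)
      = ((m.factorial : ℝ) / (p.1.factorial : ℝ) * DD p.1 * 2^p.2 / ((m : ℝ) * DD m)) *
          ((p.1 : ℝ)/(m : ℝ))^β := by
    intro p hp
    rw [← Finset.sum_mul, innerSumSplit]
  rw [Finset.sum_congr rfl h, Finset.Nat.sum_antidiagonal_eq_sum_range_succ_mk]
  dsimp only
  simp only [Nat.succ_eq_add_one]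
  rw [show m - 1 + 1 = m by omega]
  refine Finset.sum_congr rfl fun k hk => ?_
  rw [W]
  have hfac : (m.factorial : ℝ) = (m : ℝ) * ((m-1).factorial : ℝ) := by
    exact_mod_cast (Nat.mul_factorial_pred (by omega)).symm
  rw [hfac]
  have hm0 : (m : ℝ) ≠ 0 := by positivity
  have hD : DD m ≠ 0 := ne_of_gt (DD_pos m)
  field_simp

lemma W_nonneg (m k : ℕ) : 0 ≤ W m k := by
  have h1 := DD_pos k; have h2 := DD_pos m
  rw [W]; positivity

lemma W_moment (n : ℕ) {m : ℕ} (hm : 1 ≤ m) :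
    ∑ k ∈ range m, W m k * (k.choose n : ℝ) = ((m-1).choose n : ℝ) / (2*(n:ℝ)+1) := by
  have h := momId n (m-1)
  rw [show m-1+1 = m by omega] at h
  have hD : DD m ≠ 0 := ne_of_gt (DD_pos m)
  have h2 : (2*(n:ℝ)+1) ≠ 0 := by positivity
  have hL : ∑ k ∈ range m, W m k * (k.choose n : ℝ)
      = (∑ k ∈ range m, (k.choose n : ℝ) * (((m-1).factorial : ℝ)/(k.factorial : ℝ)) * DD k * 2^(m-1-k)) / DD m := by
    rw [Finset.sum_div]
    exact Finset.sum_congr rfl fun k _ => by rw [W]; ring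
  rw [hL, div_eq_div_iff hD h2]
  linear_combination h

lemma W_mass {m : ℕ} (hm : 1 ≤ m) : ∑ k ∈ range m, W m k = 1 := by
  have h := W_moment 0 hm
  simpa using h

lemma desc_tendsto (n : ℕ) :
    Tendsto (fun m : ℕ => (((m-1).descFactorial n : ℕ) : ℝ)/(m:ℝ)^n) atTop (nhds 1) := by
  induction n with
  | zero => simpa using (tendsto_const_nhds : Tendsto (fun _ : ℕ => (1:ℝ)) atTop (nhds 1))
  | succ n ih =>
    have hfac : Tendsto (fun m : ℕ => ((m-1-n : ℕ):ℝ)/(m:ℝ)) atTop (nhds 1) := by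
      have h0 : Tendsto (fun m : ℕ => ((1:ℝ)+(n:ℝ))/(m:ℝ)) atTop (nhds 0) :=
        tendsto_const_nhds.div_atTop tendsto_natCast_atTop_atTop
      have h1 : Tendsto (fun m : ℕ => 1 - ((1:ℝ)+(n:ℝ))/(m:ℝ)) atTop (nhds 1) := by
        simpa using tendsto_const_nhds.sub h0
      refine h1.congr' ?_
      filter_upwards [eventually_ge_atTop (n+2)] with m hm
      have hm0 : (m:ℝ) ≠ 0 := Nat.cast_ne_zero.mpr (by omega)
      rw [show m-1-n = m-(1+n) by omega, Nat.cast_sub (by omega : 1+n ≤ m)]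
      push_cast
      rw [sub_div, div_self hm0]
    have hmul := hfac.mul ih
    rw [one_mul] at hmul
    refine hmul.congr fun m => ?_
    rw [Nat.descFactorial_succ, pow_succ]
    push_cast
    rw [div_mul_div_comm]
    ring_nf
lemma key_bound (n : ℕ) : ∀ (k m : ℕ), k < m →
    |((k:ℝ)/(m:ℝ))^n - ((k.descFactorial n : ℕ):ℝ)/(m:ℝ)^n| ≤ (n:ℝ)^2/(m:ℝ) := by
  induction n with
  | zero => intro k m hkm; simp
  | succ n ih =>
    intro k m hkm
    have hm0 : (0:ℝ) < m := by exact_mod_cast Nat.pos_of_ne_zero (by omega)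
    have ha0 : (0:ℝ) ≤ (k:ℝ)/m := by positivity
    have ha1 : (k:ℝ)/m ≤ 1 := by
      rw [div_le_one hm0]; exact_mod_cast hkm.le
    have hP0 : (0:ℝ) ≤ ((k.descFactorial n : ℕ):ℝ)/(m:ℝ)^n := by positivity
    have hP1 : ((k.descFactorial n : ℕ):ℝ)/(m:ℝ)^n ≤ 1 := by
      rw [div_le_one (by positivity)]
      exact_mod_cast (k.descFactorial_le_pow n).trans (Nat.pow_le_pow_left hkm.le n)
    have hb : ((k - n : ℕ):ℝ)/(m:ℝ) ≤ (k:ℝ)/m ∧ (k:ℝ)/m - ((k - n : ℕ):ℝ)/(m:ℝ) ≤ (n:ℝ)/m := by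
      constructor
      · gcongr
        exact_mod_cast Nat.sub_le k n
      · rw [div_sub_div_same, div_le_div_iff₀ hm0 hm0]
        have h2 : (k:ℝ) ≤ ((k-n:ℕ):ℝ) + n := by exact_mod_cast (by omega : k ≤ (k-n) + n)
        nlinarith
    have hbP : ((k.descFactorial (n+1) : ℕ):ℝ)/(m:ℝ)^(n+1)
        = (((k - n : ℕ):ℝ)/(m:ℝ)) * (((k.descFactorial n : ℕ):ℝ)/(m:ℝ)^n) := by
      rw [Nat.descFactorial_succ, pow_succ]
      push_cast
      rw [div_mul_div_comm]
      ring_nf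
    rw [hbP]
    have hkey : ((k:ℝ)/m)^(n+1) - (((k - n : ℕ):ℝ)/(m:ℝ)) * (((k.descFactorial n : ℕ):ℝ)/(m:ℝ)^n)
        = ((k:ℝ)/m) * (((k:ℝ)/m)^n - ((k.descFactorial n : ℕ):ℝ)/(m:ℝ)^n)
          + ((k:ℝ)/m - ((k - n : ℕ):ℝ)/(m:ℝ)) * (((k.descFactorial n : ℕ):ℝ)/(m:ℝ)^n) := by
      ring
    rw [hkey, show ((n+1:ℕ):ℝ) = (n:ℝ)+1 from by push_cast; ring]
    have ihk := ih k m hkm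
    calc |((k:ℝ)/m) * (((k:ℝ)/m)^n - ((k.descFactorial n : ℕ):ℝ)/(m:ℝ)^n)
          + ((k:ℝ)/m - ((k - n : ℕ):ℝ)/(m:ℝ)) * (((k.descFactorial n : ℕ):ℝ)/(m:ℝ)^n)|
        ≤ |((k:ℝ)/m)| * |(((k:ℝ)/m)^n - ((k.descFactorial n : ℕ):ℝ)/(m:ℝ)^n)|
          + |((k:ℝ)/m - ((k - n : ℕ):ℝ)/(m:ℝ))| * |(((k.descFactorial n : ℕ):ℝ)/(m:ℝ)^n)| := by
          refine (abs_add_le _ _).trans ?_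
          rw [abs_mul, abs_mul]
      _ ≤ 1 * ((n:ℝ)^2/m) + ((n:ℝ)/m) * 1 := by
          have e1 : |((k:ℝ)/m)| ≤ 1 := by rw [abs_of_nonneg ha0]; exact ha1
          have e2 : |((k:ℝ)/m - ((k - n : ℕ):ℝ)/(m:ℝ))| ≤ (n:ℝ)/m := by
            rw [abs_of_nonneg (by linarith [hb.1])]; exact hb.2
          have e3 : |(((k.descFactorial n : ℕ):ℝ)/(m:ℝ)^n)| ≤ 1 := by
            rw [abs_of_nonneg hP0]; exact hP1
          gcongr
      _ ≤ ((n:ℝ)+1)^2/m := by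
          rw [one_mul, mul_one, ← add_div]
          gcongr
          nlinarith [Nat.cast_nonneg (α := ℝ) n]

lemma mono_tendsto (n : ℕ) :
    Tendsto (fun m : ℕ => ∑ k ∈ range m, W m k * ((k:ℝ)/(m:ℝ))^n) atTop
      (nhds (1/(2*(n:ℝ)+1))) := by
  set F : ℕ → ℝ := fun m => ∑ k ∈ range m, W m k * (((k.descFactorial n : ℕ):ℝ)/(m:ℝ)^n) with hFdef
  have hF : ∀ᶠ m : ℕ in atTop,
      (((m-1).descFactorial n : ℕ):ℝ)/(m:ℝ)^n * (1/(2*(n:ℝ)+1)) = F m := by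
    filter_upwards [eventually_ge_atTop 1] with m hm
    have h1 : F m = ((n.factorial : ℝ)/(m:ℝ)^n) * ∑ k ∈ range m, W m k * (k.choose n : ℝ) := by
      rw [hFdef, Finset.mul_sum]
      refine Finset.sum_congr rfl fun k _ => ?_
      rw [Nat.descFactorial_eq_factorial_mul_choose]
      push_cast; ring
    rw [h1, W_moment n hm, Nat.descFactorial_eq_factorial_mul_choose]
    push_cast; ring
  have hFt : Tendsto F atTop (nhds (1 * (1/(2*(n:ℝ)+1)))) :=
    Tendsto.congr' hF ((desc_tendsto n).mul tendsto_const_nhds)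
  have hg : Tendsto (fun m : ℕ => (n:ℝ)^2/(m:ℝ)) atTop (nhds 0) :=
    tendsto_const_nhds.div_atTop tendsto_natCast_atTop_atTop
  have hdiff : Tendsto (fun m : ℕ =>
      (∑ k ∈ range m, W m k * ((k:ℝ)/(m:ℝ))^n) - F m) atTop (nhds 0) := by
    refine squeeze_zero_norm' ?_ hg
    filter_upwards [eventually_ge_atTop 1] with m hm
    have hb : ‖(∑ k ∈ range m, W m k * ((k:ℝ)/(m:ℝ))^n) - F m‖
        ≤ ∑ k ∈ range m, W m k * ((n:ℝ)^2/(m:ℝ)) := by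
      rw [hFdef, ← Finset.sum_sub_distrib, Real.norm_eq_abs]
      refine (Finset.abs_sum_le_sum_abs _ _).trans (Finset.sum_le_sum fun k hk => ?_)
      rw [← mul_sub, abs_mul, abs_of_nonneg (W_nonneg m k)]
      exact mul_le_mul_of_nonneg_left (key_bound n k m (Finset.mem_range.mp hk)) (W_nonneg m k)
    refine hb.trans ?_
    rw [← Finset.sum_mul, W_mass hm, one_mul]
  have := hdiff.add hFt
  rw [zero_add] at this
  have heq : ∀ m : ℕ, ((∑ k ∈ range m, W m k * ((k:ℝ)/(m:ℝ))^n) - F m) + F m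
      = ∑ k ∈ range m, W m k * ((k:ℝ)/(m:ℝ))^n := fun m => by ring
  simpa [heq, one_mul] using this

lemma rpow_int_eq (r : ℝ) (hr : -1 < r) :
    ∫ x in (0:ℝ)..1, x ^ r / 2 = 1/(2*(r+1)) := by
  rw [intervalIntegral.integral_div, integral_rpow (Or.inl hr)]
  rw [Real.one_rpow, Real.zero_rpow (by linarith)]
  field_simp
  ring

lemma weight_integrable {r : ℝ} (hr : -1 < r) :
    IntervalIntegrable (fun x : ℝ => x ^ r / 2) MeasureTheory.volume 0 1 :=
  (intervalIntegral.intervalIntegrable_rpow' hr).div_const 2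

lemma mono_weight_eqon (i : ℕ) :
    Set.EqOn (fun x : ℝ => x ^ i * (x ^ (-(1/2) : ℝ) / 2))
      (fun x : ℝ => x ^ ((i:ℝ) - 1/2) / 2) (Set.uIcc (0:ℝ) 1) := by
  intro x hx
  rw [Set.uIcc_of_le (by norm_num : (0:ℝ) ≤ 1)] at hx
  rcases eq_or_lt_of_le hx.1 with h0 | h0
  · simp only [← h0]
    rw [Real.zero_rpow (by norm_num), Real.zero_rpow (by
      intro h
      have : (i:ℝ) = 1/2 := by linarith [sub_eq_zero.mp h]
      rcases i with _ | i
      · norm_num at this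
      · push_cast at this; linarith [Nat.cast_nonneg (α := ℝ) i])]
    simp
  · show (x:ℝ) ^ i * (x ^ (-(1/2):ℝ) / 2) = x ^ ((i:ℝ) - 1/2) / 2
    rw [← Real.rpow_natCast x i, ← mul_div_assoc, ← Real.rpow_add h0]
    rw [sub_eq_add_neg]

lemma weighted_ae (c : ℝ) : ∀ᵐ x ∂(MeasureTheory.volume : MeasureTheory.Measure ℝ),
    x ∈ Set.uIoc (0:ℝ) 1 → x ^ c * (x ^ (-(1/2):ℝ)/2) = x ^ (c - 1/2)/2 := by
  filter_upwards with x hx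
  rw [Set.uIoc_of_le (by norm_num : (0:ℝ) ≤ 1)] at hx
  rw [← mul_div_assoc, ← Real.rpow_add hx.1, sub_eq_add_neg]

lemma weighted_integrable (c : ℝ) (hc : 0 ≤ c) :
    IntervalIntegrable (fun x : ℝ => x ^ c * (x ^ (-(1/2):ℝ)/2)) MeasureTheory.volume 0 1 := by
  refine (weight_integrable (by norm_num : (-1:ℝ) < -(1/2))).continuousOn_mul ?_
  exact (Real.continuous_rpow_const hc).continuousOn

lemma weighted_integral (c : ℝ) (hc : -1/2 < c) :
    ∫ x in (0:ℝ)..1, x ^ c * (x ^ (-(1/2):ℝ)/2) = 1/(2*c+1) := by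
  rw [intervalIntegral.integral_congr_ae (weighted_ae c), rpow_int_eq (c - 1/2) (by linarith)]
  ring_nf

lemma nat_weighted_integrable (i : ℕ) :
    IntervalIntegrable (fun x : ℝ => x ^ (i:ℕ) * (x ^ (-(1/2):ℝ)/2)) MeasureTheory.volume 0 1 := by
  have h := weighted_integrable (i:ℝ) (by positivity)
  simpa [Real.rpow_natCast] using h

lemma nat_weighted_integral (i : ℕ) :
    ∫ x in (0:ℝ)..1, x ^ (i:ℕ) * (x ^ (-(1/2):ℝ)/2) = 1/(2*(i:ℝ)+1) := by
  have h := weighted_integral (i:ℝ) (by have := Nat.cast_nonneg (α := ℝ) i; linarith)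
  simp only [Real.rpow_natCast] at h
  rw [← h]

noncomputable def Lfun (p : Polynomial ℝ) : ℝ :=
  ∑ i ∈ range (p.natDegree+1), p.coeff i * (1/(2*(i:ℝ)+1))

lemma L_eq_integral (p : Polynomial ℝ) :
    Lfun p = ∫ x in (0:ℝ)..1, p.eval x * (x ^ (-(1/2):ℝ)/2) := by
  have h1 : ∀ x : ℝ, p.eval x * (x ^ (-(1/2):ℝ)/2)
      = ∑ i ∈ range (p.natDegree+1), p.coeff i * (x ^ i * (x ^ (-(1/2):ℝ)/2)) := by
    intro x
    rw [Polynomial.eval_eq_sum_range, Finset.sum_mul]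
    exact Finset.sum_congr rfl fun i _ => by ring
  simp_rw [h1]
  rw [intervalIntegral.integral_finset_sum
    (fun i _ => (nat_weighted_integrable i).const_mul (p.coeff i))]
  rw [Lfun]
  refine Finset.sum_congr rfl fun i _ => ?_
  rw [intervalIntegral.integral_const_mul, nat_weighted_integral]

lemma L_close (p : Polynomial ℝ) (β ε : ℝ) (hβ : 0 < β) (hε : 0 ≤ ε)
    (hp : ∀ x ∈ Set.Icc (0:ℝ) 1, |p.eval x - x ^ β| ≤ ε) :
    |Lfun p - 1/(1+2*β)| ≤ ε := by
  have hbi : IntervalIntegrable (fun x : ℝ => x ^ β * (x ^ (-(1/2):ℝ)/2))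
      MeasureTheory.volume 0 1 := weighted_integrable β hβ.le
  have hpi : IntervalIntegrable (fun x : ℝ => p.eval x * (x ^ (-(1/2):ℝ)/2))
      MeasureTheory.volume 0 1 :=
    (weight_integrable (by norm_num : (-1:ℝ) < -(1/2))).continuousOn_mul p.continuous.continuousOn
  have hbval : ∫ x in (0:ℝ)..1, x ^ β * (x ^ (-(1/2):ℝ)/2) = 1/(1+2*β) := by
    rw [weighted_integral β (by linarith)]
    ring_nf
  rw [L_eq_integral, ← hbval, ← intervalIntegral.integral_sub hpi hbi]
  have hεint : IntervalIntegrable (fun x : ℝ => ε * (x ^ (-(1/2):ℝ)/2))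
      MeasureTheory.volume 0 1 :=
    (weight_integrable (by norm_num : (-1:ℝ) < -(1/2))).const_mul ε
  have hbound : |∫ x in (0:ℝ)..1,
      (p.eval x * (x ^ (-(1/2):ℝ)/2) - x ^ β * (x ^ (-(1/2):ℝ)/2))|
      ≤ |∫ x in (0:ℝ)..1, ε * (x ^ (-(1/2):ℝ)/2)| := by
    refine le_trans ?_ (le_abs_self _)
    rw [← Real.norm_eq_abs]
    apply intervalIntegral.norm_integral_le_of_norm_le (by norm_num : (0:ℝ) ≤ 1) ?_ hεint
    filter_upwards with t ht
    have h1 : p.eval t * (t ^ (-(1/2):ℝ)/2) - t ^ β * (t ^ (-(1/2):ℝ)/2)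
        = (p.eval t - t ^ β) * (t ^ (-(1/2):ℝ)/2) := by ring
    have hrp : (0:ℝ) ≤ t ^ (-(1/2):ℝ)/2 :=
      div_nonneg (Real.rpow_nonneg ht.1.le _) (by norm_num)
    rw [h1, Real.norm_eq_abs, abs_mul, abs_of_nonneg hrp]
    exact mul_le_mul_of_nonneg_right (hp t ⟨ht.1.le, ht.2⟩) hrp
  refine hbound.trans ?_
  rw [intervalIntegral.integral_const_mul]
  rw [rpow_int_eq (-(1/2)) (by norm_num)]
  rw [show (1:ℝ)/(2*(-(1/2)+1)) = 1 by norm_num, mul_one, abs_of_nonneg hε]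

lemma poly_tendsto (p : Polynomial ℝ) :
    Tendsto (fun m : ℕ => ∑ k ∈ range m, W m k * p.eval ((k:ℝ)/(m:ℝ))) atTop
      (nhds (Lfun p)) := by
  have h1 : ∀ m : ℕ, ∑ i ∈ range (p.natDegree+1),
        p.coeff i * ∑ k ∈ range m, W m k * ((k:ℝ)/(m:ℝ))^i
      = ∑ k ∈ range m, W m k * p.eval ((k:ℝ)/(m:ℝ)) := by
    intro m
    rw [show ∑ k ∈ range m, W m k * p.eval ((k:ℝ)/(m:ℝ))
        = ∑ k ∈ range m, ∑ i ∈ range (p.natDegree+1),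
            p.coeff i * (W m k * ((k:ℝ)/(m:ℝ))^i) from
      Finset.sum_congr rfl fun k _ => by
        rw [Polynomial.eval_eq_sum_range, Finset.mul_sum]
        exact Finset.sum_congr rfl fun i _ => by ring]
    rw [Finset.sum_comm]
    exact Finset.sum_congr rfl fun i _ => by
      rw [Finset.mul_sum]
  have h2 := tendsto_finset_sum (range (p.natDegree+1))
    (fun i _ => (mono_tendsto i).const_mul (p.coeff i))
  exact (h2.congr h1)

/-- The `β`-th moment of the normalized first split size converges to `1/(1+2β)`,
the `β`-th moment of the Beta(1/2,1) distribution. -/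
theorem splitProb_moment_tendsto (β : ℝ) (hβ : 0 < β) :
    Tendsto
      (fun m : ℕ =>
        ∑ x ∈ Finset.Nat.antidiagonalTuple 3 (m - 1),
          splitProb m (x 0) (x 1) (x 2) * ((x 0 : ℝ) / (m : ℝ)) ^ β)
      atTop (nhds (1 / (1 + 2 * β))) := by
  rw [Metric.tendsto_atTop]
  intro ε hε
  have hcont : ContinuousOn (fun x : ℝ => x ^ β) (Set.Icc 0 1) :=
    (Real.continuous_rpow_const hβ.le).continuousOn
  obtain ⟨p, hp⟩ := exists_polynomial_near_of_continuousOn 0 1 _ hcont (ε/3) (by linarith)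
  have hp' : ∀ x ∈ Set.Icc (0:ℝ) 1, |p.eval x - x ^ β| ≤ ε/3 := fun x hx => (hp x hx).le
  have hL := L_close p β (ε/3) hβ (by linarith) hp'
  have hpt := poly_tendsto p
  rw [Metric.tendsto_atTop] at hpt
  obtain ⟨N, hN⟩ := hpt (ε/3) (by linarith)
  refine ⟨max N 1, fun m hm => ?_⟩
  have hm1 : 1 ≤ m := le_trans (le_max_right N 1) hm
  have hmN : N ≤ m := le_trans (le_max_left N 1) hm
  rw [sum_eq β hm1, Real.dist_eq]
  have hdist := hN m hmN
  rw [Real.dist_eq] at hdist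
  have hSA : |(∑ k ∈ range m, W m k * ((k:ℝ)/(m:ℝ))^β)
      - ∑ k ∈ range m, W m k * p.eval ((k:ℝ)/(m:ℝ))| ≤ ε/3 := by
    rw [← Finset.sum_sub_distrib]
    refine (Finset.abs_sum_le_sum_abs _ _).trans ?_
    have hb : ∀ k ∈ range m,
        |W m k * ((k:ℝ)/(m:ℝ))^β - W m k * p.eval ((k:ℝ)/(m:ℝ))| ≤ W m k * (ε/3) := by
      intro k hk
      rw [← mul_sub, abs_mul, abs_of_nonneg (W_nonneg m k)]
      refine mul_le_mul_of_nonneg_left ?_ (W_nonneg m k)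
      have hmpos : (0:ℝ) < m := by
        exact_mod_cast Nat.pos_of_ne_zero (by omega)
      have hk' : (k:ℝ)/(m:ℝ) ∈ Set.Icc (0:ℝ) 1 := ⟨by positivity, by
        rw [div_le_one hmpos]
        exact_mod_cast (Finset.mem_range.mp hk).le⟩
      have h := hp' _ hk'
      rw [abs_sub_comm] at h
      exact h
    refine (Finset.sum_le_sum hb).trans ?_
    rw [← Finset.sum_mul, W_mass hm1, one_mul]
  have hsplit : (∑ k ∈ range m, W m k * ((k:ℝ)/(m:ℝ))^β) - 1/(1+2*β)
      = ((∑ k ∈ range m, W m k * ((k:ℝ)/(m:ℝ))^β)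
          - ∑ k ∈ range m, W m k * p.eval ((k:ℝ)/(m:ℝ)))
        + (((∑ k ∈ range m, W m k * p.eval ((k:ℝ)/(m:ℝ))) - Lfun p)
          + (Lfun p - 1/(1+2*β))) := by ring
  rw [hsplit]
  calc |_ + (_ + _)| ≤ _ := abs_add_le _ _
    _ < ε := by
        have h3 := abs_add_le ((∑ k ∈ range m, W m k * p.eval ((k:ℝ)/(m:ℝ))) - Lfun p)
          (Lfun p - 1/(1+2*β))
        linarith
end

section
/- Let β ∈ (0, 1), let K ≥ 2 and n ≥ K be integers, and let (X_t)_{t ≥ 0} be a stochastic process on a probability space, taking values in ℕ, adapted to a filtration (F_t), with X_0 = n almost surely, such that almost surely X_{t+1} ≤ X_t for all t, and X_{t+1} < X_t on the event {X_t ≥ K}. Suppose that for every t, almost surely on the event {X_t ≥ K}: E[ X_{t+1}^{β−1} · 1_{X_{t+1} ≥ 1} | F_t ] ≥ X_t^{β−1}. Let S = inf{ t : X_t ≤ K − 1 } (which is almost surely finite, indeed S ≤ n). Then P( X_S ≥ 1 ) ≥ n^{β−1}. -/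
open MeasureTheory Filter Real

set_option maxHeartbeats 1000000

/-- Optional-sampling lower bound for the size chain: if `X` starts at `n`, is
nonincreasing, strictly decreases while `≥ K`, and
`E[X_{t+1}^{β-1} 1_{X_{t+1} ≥ 1} | F_t] ≥ X_t^{β-1}` on `{X_t ≥ K}`, then the
probability of entering `{1, …, K-1}` (rather than hitting `0`) is at least
`n^{β-1}`. -/
theorem hitting_probability_lower_bound
    {Ω : Type*} [m0 : MeasurableSpace Ω] (P : Measure Ω) [IsProbabilityMeasure P]
    (β : ℝ) (hβ0 : 0 < β) (hβ1 : β < 1)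
    (K n : ℕ) (hK : 2 ≤ K) (hn : K ≤ n)
    (F : Filtration ℕ m0) (X : ℕ → Ω → ℕ)
    (hadapted : ∀ t, @Measurable Ω ℕ (F t) _ (X t))
    (h0 : ∀ᵐ ω ∂P, X 0 ω = n)
    (hmono : ∀ᵐ ω ∂P, ∀ t, X (t + 1) ω ≤ X t ω ∧ (K ≤ X t ω → X (t + 1) ω < X t ω))
    (hstep : ∀ t, ∀ᵐ ω ∂P, K ≤ X t ω →
      ((X t ω : ℝ)) ^ (β - 1) ≤
        (P[fun ω' => ((X (t + 1) ω' : ℝ)) ^ (β - 1) *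
            (if 1 ≤ X (t + 1) ω' then (1 : ℝ) else 0) | F t]) ω)
    (S : Ω → ℕ) (hS : ∀ ω, S ω = sInf {t | X t ω ≤ K - 1}) :
    ENNReal.ofReal ((n : ℝ) ^ (β - 1)) ≤ P {ω | 1 ≤ X (S ω) ω} := by
  have hβ : β - 1 < 0 := by linarith
  have hXm : ∀ t, Measurable (X t) := fun t => (hadapted t).mono (F.le t) le_rfl
  obtain ⟨g, hgdef⟩ : ∃ g : ℕ → Ω → ℝ, g =
      fun t ω => ((X t ω : ℝ)) ^ (β - 1) * (if 1 ≤ X t ω then (1 : ℝ) else 0) := ⟨_, rfl⟩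
  have hg_nonneg : ∀ t ω, 0 ≤ g t ω := by
    intro t ω
    simp only [hgdef]
    apply mul_nonneg (rpow_nonneg (Nat.cast_nonneg _) _)
    split <;> norm_num
  have hg_le_one : ∀ t ω, g t ω ≤ 1 := by
    intro t ω
    by_cases h : 1 ≤ X t ω
    · simp only [hgdef, h, if_pos, mul_one]
      exact rpow_le_one_of_one_le_of_nonpos (by exact_mod_cast h) hβ.le
    · simp [hgdef, h]
  have hg_meas : ∀ t, Measurable (g t) := by
    intro t
    rw [hgdef]
    exact Measurable.comp
      (measurable_from_top :
        Measurable fun k : ℕ => ((k : ℝ)) ^ (β - 1) * (if 1 ≤ k then (1 : ℝ) else 0))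
      (hXm t)
  have hg_int : ∀ t, Integrable (g t) P := by
    intro t
    refine (integrable_const (1 : ℝ)).mono' (hg_meas t).aestronglyMeasurable ?_
    filter_upwards with ω
    rw [Real.norm_eq_abs, abs_of_nonneg (hg_nonneg t ω)]
    exact hg_le_one t ω
  -- measurability of S
  have hSle : ∀ k, MeasurableSet {ω | S ω ≤ k} := by
    intro k
    have hrw : {ω | S ω ≤ k} =
        (⋃ j ∈ Set.Iic k, {ω | X j ω ≤ K - 1}) ∪ ⋂ t, {ω | ¬X t ω ≤ K - 1} := by
      ext ω
      simp only [Set.mem_setOf_eq, Set.mem_union, Set.mem_iUnion, Set.mem_iInter, Set.mem_Iic,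
        exists_prop]
      constructor
      · intro h
        by_cases hne : {t | X t ω ≤ K - 1}.Nonempty
        · exact Or.inl ⟨S ω, h, by rw [hS] at h ⊢; exact Nat.sInf_mem hne⟩
        · exact Or.inr fun t ht => hne ⟨t, ht⟩
      · rintro (⟨j, hj, hXj⟩ | h)
        · rw [hS]; exact le_trans (Nat.sInf_le hXj) hj
        · rw [hS]
          have : {t | X t ω ≤ K - 1} = ∅ :=
            Set.eq_empty_iff_forall_notMem.2 fun t ht => h t ht
          rw [this, Nat.sInf_empty]
          exact Nat.zero_le _
    rw [hrw]
    refine MeasurableSet.union ?_ ?_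
    · exact MeasurableSet.biUnion (Set.to_countable _)
        fun j _ => (hXm j) measurableSet_Iic
    · exact MeasurableSet.iInter fun t => ((hXm t) measurableSet_Iic).compl
  have hSmeas : Measurable S := by
    apply measurable_to_countable'
    intro k
    match k with
    | 0 =>
      have : S ⁻¹' {0} = {ω | S ω ≤ 0} := by ext ω; simp [Nat.le_zero]
      rw [this]; exact hSle 0
    | (k + 1) =>
      have : S ⁻¹' {k + 1} = {ω | S ω ≤ k + 1} \ {ω | S ω ≤ k} := by
        ext ω; simp only [Set.mem_preimage, Set.mem_singleton_iff, Set.mem_diff,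
          Set.mem_setOf_eq]; omega
      rw [this]; exact (hSle _).diff (hSle k)
  have hXSmeas : Measurable fun ω => X (S ω) ω := by
    have hpm : Measurable fun p : Ω × ℕ => X p.2 p.1 :=
      measurable_from_prod_countable_left fun k => hXm k
    exact hpm.comp (measurable_id.prodMk hSmeas)
  -- the stopped process
  obtain ⟨Z, hZdef⟩ : ∃ Z : ℕ → Ω → ℝ, Z = fun t ω => g (min t (S ω)) ω := ⟨_, rfl⟩
  have hZmeas : ∀ t, Measurable (Z t) := by
    intro t
    rw [hZdef]
    have hpm : Measurable fun p : Ω × ℕ => g p.2 p.1 :=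
      measurable_from_prod_countable_left fun k => hg_meas k
    have hmin : Measurable fun ω => min t (S ω) :=
      (measurable_from_top (f := fun k : ℕ => min t k)).comp hSmeas
    exact hpm.comp (measurable_id.prodMk hmin)
  have hZint : ∀ t, Integrable (Z t) P := by
    intro t
    refine (integrable_const (1 : ℝ)).mono' (hZmeas t).aestronglyMeasurable ?_
    filter_upwards with ω
    rw [hZdef, Real.norm_eq_abs, abs_of_nonneg (hg_nonneg _ ω)]
    exact hg_le_one _ ω
  -- pointwise facts on the a.s. good set
  have key : ∀ ω, X 0 ω = n →
      (∀ t, X (t + 1) ω ≤ X t ω ∧ (K ≤ X t ω → X (t + 1) ω < X t ω)) →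
      S ω ≤ n ∧ X (S ω) ω ≤ K - 1 ∧ ∀ t, (t < S ω ↔ K ≤ X t ω) := by
    intro ω hω0 hωm
    have anti : Antitone fun t => X t ω := antitone_nat_of_succ_le fun t => (hωm t).1
    have hbound : ∀ s, (∀ j, j < s → K ≤ X j ω) → X s ω + s ≤ n := by
      intro s
      induction s with
      | zero => intro _; simp [hω0]
      | succ s ih =>
        intro h
        have h1 : X s ω + s ≤ n := ih fun j hj => h j (by omega)
        have h2 : X (s + 1) ω < X s ω := (hωm s).2 (h s (by omega))
        omega
    have hne : {t | X t ω ≤ K - 1}.Nonempty := by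
      by_contra hc
      rw [Set.not_nonempty_iff_eq_empty] at hc
      have hall : ∀ t, K ≤ X t ω := by
        intro t
        have : t ∉ {t | X t ω ≤ K - 1} := by rw [hc]; exact Set.notMem_empty t
        simp only [Set.mem_setOf_eq] at this
        omega
      have := hbound (n + 1) fun j _ => hall j
      omega
    have hmem : X (S ω) ω ≤ K - 1 := by rw [hS]; exact Nat.sInf_mem hne
    have hlt : ∀ t, t < S ω → K ≤ X t ω := by
      intro t ht
      rw [hS] at ht
      have := Nat.notMem_of_lt_sInf ht
      simp only [Set.mem_setOf_eq] at this
      omega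
    have hiff : ∀ t, t < S ω ↔ K ≤ X t ω := by
      intro t
      constructor
      · exact hlt t
      · intro h
        by_contra hcon
        push_neg at hcon
        have := anti hcon
        simp only at this
        omega
    have hSn : S ω ≤ n := by
      have := hbound (S ω) hlt
      omega
    exact ⟨hSn, hmem, hiff⟩
  -- base case
  have hbase : ∫ ω, Z 0 ω ∂P = (n : ℝ) ^ (β - 1) := by
    have hae : ∀ᵐ ω ∂P, Z 0 ω = (n : ℝ) ^ (β - 1) := by
      filter_upwards [h0] with ω hω
      simp only [hZdef, hgdef]
      rw [show min 0 (S ω) = 0 by omega, hω, if_pos (by omega : 1 ≤ n), mul_one]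
    rw [integral_congr_ae hae, integral_const]
    simp
  -- inductive step
  have hstep' : ∀ t, ∫ ω, Z t ω ∂P ≤ ∫ ω, Z (t + 1) ω ∂P := by
    intro t
    set B : Set Ω := {ω | K ≤ X t ω} with hBdef
    have hBft : MeasurableSet[F t] B := (hadapted t) measurableSet_Ici
    have hB : MeasurableSet B := F.le t B hBft
    have hint_ind : ∀ s, Integrable (B.indicator (g s)) P := fun s => (hg_int s).indicator hB
    have hsplit : ∀ᵐ ω ∂P,
        Z (t + 1) ω = Z t ω - B.indicator (g t) ω + B.indicator (g (t + 1)) ω := by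
      filter_upwards [h0, hmono] with ω hω0 hωm
      obtain ⟨hSn, hXS, hiff⟩ := key ω hω0 hωm
      by_cases hωB : ω ∈ B
      · have ht : t < S ω := (hiff t).2 hωB
        rw [Set.indicator_of_mem hωB, Set.indicator_of_mem hωB]
        simp only [hZdef]
        rw [min_eq_left (by omega), min_eq_left (by omega)]
        ring
      · have ht : S ω ≤ t := by
          by_contra h
          push_neg at h
          exact hωB ((hiff t).1 h)
        rw [Set.indicator_of_notMem hωB, Set.indicator_of_notMem hωB]
        simp only [hZdef]
        rw [min_eq_right (by omega), min_eq_right (by omega)]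
        ring
    have hkey : ∫ ω, B.indicator (g t) ω ∂P ≤ ∫ ω, B.indicator (g (t + 1)) ω ∂P := by
      rw [integral_indicator hB, integral_indicator hB]
      have hstep2 : ∀ᵐ ω ∂P, K ≤ X t ω →
          ((X t ω : ℝ)) ^ (β - 1) ≤ (P[g (t + 1)|F t]) ω := by
        simp only [hgdef]
        exact hstep t
      have h1 : ∫ ω in B, g (t + 1) ω ∂P = ∫ ω in B, (P[g (t + 1)|F t]) ω ∂P :=
        (setIntegral_condExp (F.le t) (hg_int (t + 1)) hBft).symm
      have hpow_int : Integrable (fun ω => ((X t ω : ℝ)) ^ (β - 1)) P := by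
        refine (integrable_const (1 : ℝ)).mono' ?_ ?_
        · exact (Measurable.comp
            (measurable_from_top : Measurable fun k : ℕ => ((k : ℝ)) ^ (β - 1))
            (hXm t)).aestronglyMeasurable
        · filter_upwards with ω
          rw [Real.norm_eq_abs, abs_of_nonneg (rpow_nonneg (Nat.cast_nonneg _) _)]
          rcases Nat.eq_zero_or_pos (X t ω) with h | h
          · rw [h]; simp only [Nat.cast_zero]
            rw [Real.zero_rpow (by linarith)]; norm_num
          · exact rpow_le_one_of_one_le_of_nonpos (by exact_mod_cast h) hβ.le
      have h2 : ∫ ω in B, ((X t ω : ℝ)) ^ (β - 1) ∂P ≤ ∫ ω in B, (P[g (t + 1)|F t]) ω ∂P := by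
        refine setIntegral_mono_ae_restrict hpow_int.integrableOn
          integrable_condExp.integrableOn ?_
        rw [Filter.EventuallyLE, ae_restrict_iff' hB]
        exact hstep2
      have h3 : ∫ ω in B, g t ω ∂P = ∫ ω in B, ((X t ω : ℝ)) ^ (β - 1) ∂P := by
        refine setIntegral_congr_ae hB ?_
        filter_upwards with ω hω
        have h1' : 1 ≤ X t ω := by
          have : K ≤ X t ω := hω
          omega
        simp only [hgdef, if_pos h1', mul_one]
      rw [h3, h1]
      exact h2
    calc ∫ ω, Z t ω ∂P
        ≤ ∫ ω, Z t ω ∂P - ∫ ω, B.indicator (g t) ω ∂P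
          + ∫ ω, B.indicator (g (t + 1)) ω ∂P := by linarith
      _ = ∫ ω, (Z t ω - B.indicator (g t) ω) ∂P
          + ∫ ω, B.indicator (g (t + 1)) ω ∂P := by
          rw [integral_sub (hZint t) (hint_ind t)]
      _ = ∫ ω, (Z t ω - B.indicator (g t) ω + B.indicator (g (t + 1)) ω) ∂P :=
          (integral_add ((hZint t).sub (hint_ind t)) (hint_ind (t + 1))).symm
      _ = ∫ ω, Z (t + 1) ω ∂P := (integral_congr_ae hsplit).symm
  have hmain : ∀ t, (n : ℝ) ^ (β - 1) ≤ ∫ ω, Z t ω ∂P := by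
    intro t
    induction t with
    | zero => rw [hbase]
    | succ t ih => exact ih.trans (hstep' t)
  -- conclusion
  set D : Set Ω := {ω | 1 ≤ X (S ω) ω} with hDdef
  have hD : MeasurableSet D := hXSmeas measurableSet_Ici
  have hfin : ∀ᵐ ω ∂P, Z n ω ≤ D.indicator (fun _ => (1 : ℝ)) ω := by
    filter_upwards [h0, hmono] with ω hω0 hωm
    obtain ⟨hSn, hXS, hiff⟩ := key ω hω0 hωm
    have hZn : Z n ω = g (S ω) ω := by
      simp only [hZdef]
      rw [min_eq_right hSn]
    rw [hZn]
    by_cases hωD : ω ∈ D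
    · rw [Set.indicator_of_mem hωD]
      exact hg_le_one _ ω
    · rw [Set.indicator_of_notMem hωD]
      have hω1 : ¬1 ≤ X (S ω) ω := hωD
      simp [hgdef, hω1]
  have h4 : ∫ ω, Z n ω ∂P ≤ (P D).toReal := by
    calc ∫ ω, Z n ω ∂P ≤ ∫ ω, D.indicator (fun _ => (1 : ℝ)) ω ∂P :=
          integral_mono_ae (hZint n) ((integrable_const (1 : ℝ)).indicator hD) hfin
      _ = (P D).toReal := by rw [integral_indicator_const _ hD]; simp [Measure.real_def]
  exact ENNReal.ofReal_le_of_le_toReal ((hmain n).trans h4)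
end
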